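/- arXiv:1101.1710 — 7 statements merged into one kernel-verified Lean document; each statement's English description precedes it below -/
import Mathlib

section
/- Let b_1, ..., b_n be real numbers with sum of squares equal to 1, and let X_1, ..., X_n be independent uniform random variables on {-1, 1}. Then the expected value of |sum_i b_i X_i| is at least 1/12. -/
noncomputable def Ssum (n : ℕ) (b : Fin n → ℝ) (σ : Fin n → Bool) : ℝ :=
  ∑ i, b i * (if σ i then 1 else -1)

lemma sum_succ (n : ℕ) (f : (Fin (n+1) → Bool) → ℝ) :
    ∑ σ : Fin (n+1) → Bool, f σ
      = ∑ c : Bool, ∑ τ : Fin n → Bool, f (Fin.cons c τ) := by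
  calc ∑ σ : Fin (n+1) → Bool, f σ
      = ∑ p : Bool × (Fin n → Bool), f (Fin.cons p.1 p.2) :=
        (Fintype.sum_equiv (Fin.consEquiv fun _ => Bool) _ _ (fun p => rfl)).symm
    _ = _ := by rw [Fintype.sum_prod_type]

lemma Ssum_cons (n : ℕ) (b : Fin (n+1) → ℝ) (c : Bool) (τ : Fin n → Bool) :
    Ssum (n+1) b (Fin.cons c τ)
      = b 0 * (if c then 1 else -1) + Ssum n (fun i => b i.succ) τ := by
  simp [Ssum, Fin.sum_univ_succ]

lemma card_fun_bool (n : ℕ) : (Fintype.card (Fin n → Bool) : ℝ) = 2^n := by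
  simp [Fintype.card_fun]

lemma sum2 (n : ℕ) : ∀ b : Fin n → ℝ,
    ∑ σ : Fin n → Bool, (Ssum n b σ)^2 = 2^n * ∑ i, (b i)^2 := by
  induction n with
  | zero => intro b; simp [Ssum]
  | succ n ih =>
    intro b
    rw [sum_succ n (fun σ => (Ssum (n+1) b σ)^2)]
    have key : ∀ c : Bool, ∑ τ : Fin n → Bool,
        (Ssum (n+1) b (Fin.cons c τ))^2
        = 2^n * (b 0)^2 + 2^n * (∑ i : Fin n, (b i.succ)^2)
          + (2 * (b 0 * (if c then 1 else -1))) * ∑ τ : Fin n → Bool, Ssum n (fun i => b i.succ) τ := by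
      intro c
      have expand : ∀ τ : Fin n → Bool, (Ssum (n+1) b (Fin.cons c τ))^2
          = (b 0 * (if c then 1 else -1))^2 + (Ssum n (fun i => b i.succ) τ)^2
            + (2 * (b 0 * (if c then 1 else -1))) * Ssum n (fun i => b i.succ) τ := by
        intro τ; rw [Ssum_cons]; ring
      rw [Finset.sum_congr rfl (fun τ _ => expand τ), Finset.sum_add_distrib,
        Finset.sum_add_distrib, ih (fun i => b i.succ), Finset.sum_const,
        ← Finset.mul_sum, Finset.card_univ, nsmul_eq_mul, card_fun_bool]
      cases c <;> simp <;> ring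
    simp only [key]
    rw [Fin.sum_univ_succ (f := fun i => (b i)^2)]
    simp only [Fintype.sum_bool]
    norm_num
    ring
  
lemma sum4 (n : ℕ) : ∀ b : Fin n → ℝ,
    ∑ σ : Fin n → Bool, (Ssum n b σ)^4 ≤ 2^n * (3 * (∑ i, (b i)^2)^2) := by
  induction n with
  | zero => intro b; simp [Ssum]
  | succ n ih =>
    intro b
    rw [sum_succ n (fun σ => (Ssum (n+1) b σ)^4)]
    set a := b 0 with ha
    set t := ∑ i : Fin n, (b i.succ)^2 with ht
    have ht0 : 0 ≤ t := Finset.sum_nonneg fun i _ => sq_nonneg _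
    have h2 := sum2 n (fun i => b i.succ)
    have h4 := ih (fun i => b i.succ)
    have keyeq : ∀ c : Bool, ∑ τ : Fin n → Bool,
        (Ssum (n+1) b (Fin.cons c τ))^4
        = (∑ τ : Fin n → Bool, (Ssum n (fun i => b i.succ) τ)^4)
          + 2^n * (6*a^2*t + a^4)
          + (4*a^3 * (if c then 1 else -1)) * (∑ τ : Fin n → Bool, Ssum n (fun i => b i.succ) τ)
          + (4*a*(if c then 1 else -1)) * (∑ τ : Fin n → Bool, (Ssum n (fun i => b i.succ) τ)^3) := by
      intro c
      have expand : ∀ τ : Fin n → Bool,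
          (Ssum (n+1) b (Fin.cons c τ))^4
          = (Ssum n (fun i => b i.succ) τ)^4
            + (6*a^2)*(Ssum n (fun i => b i.succ) τ)^2 + a^4
            + (4*a^3 * (if c then 1 else -1)) * Ssum n (fun i => b i.succ) τ
            + (4*a*(if c then 1 else -1)) * (Ssum n (fun i => b i.succ) τ)^3 := by
        intro τ; rw [Ssum_cons]; cases c <;> simp <;> ring
      rw [Finset.sum_congr rfl (fun τ _ => expand τ)]
      rw [Finset.sum_add_distrib, Finset.sum_add_distrib, Finset.sum_add_distrib,
        Finset.sum_add_distrib, ← Finset.mul_sum, ← Finset.mul_sum, ← Finset.mul_sum,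
        h2, Finset.sum_const, Finset.card_univ, nsmul_eq_mul, card_fun_bool, ← ht]
      ring
    calc ∑ c : Bool, ∑ τ : Fin n → Bool, (Ssum (n+1) b (Fin.cons c τ))^4
        = 2 * (∑ τ : Fin n → Bool, (Ssum n (fun i => b i.succ) τ)^4)
          + 2^(n+1) * (6*a^2*t + a^4) := by
          simp only [keyeq, Fintype.sum_bool]
          norm_num; ring
      _ ≤ 2^(n+1) * (3 * (∑ i, (b i)^2)^2) := by
          rw [Fin.sum_univ_succ (f := fun i => (b i)^2), ← ha, ← ht, pow_succ]
          have h2n : (0:ℝ) < 2^n := by positivity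
          nlinarith [h4, mul_nonneg h2n.le (sq_nonneg (a^2)), mul_nonneg h2n.le (sq_nonneg a), ht0, h2n]

/-- Khintchine-type lower bound: if `∑ i, (b i)^2 = 1`, then the expectation over
uniform sign vectors `σ : Fin n → Bool` of `|∑ i, b i * ±1|` is at least `1/12`. -/
theorem stmt0 (n : ℕ) (b : Fin n → ℝ) (hb : ∑ i, (b i)^2 = 1) :
    (1 : ℝ)/12 ≤ (2^n : ℝ)⁻¹ *
      ∑ σ : Fin n → Bool, |∑ i, b i * (if σ i then 1 else -1)| := by
  have h2 := sum2 n b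
  have h4 := sum4 n b
  rw [hb] at h2 h4
  have hpt : ∀ σ : Fin n → Bool, (Ssum n b σ)^2 - (Ssum n b σ)^4/4 ≤ |Ssum n b σ| := by
    intro σ
    set s := Ssum n b σ
    have habs : |s|^2 = s^2 := sq_abs s
    have habs4 : |s|^4 = s^4 := by
      rw [show (4:ℕ) = 2*2 from rfl, pow_mul, pow_mul, habs]
    nlinarith [abs_nonneg s, sq_nonneg (|s| - 1), sq_nonneg (|s|^2 - 2*|s|), sq_nonneg (|s|^2 - 2)]
  have hsum : (2:ℝ)^n * 1 - (2^n * (3 * 1^2))/4 ≤ ∑ σ : Fin n → Bool, |Ssum n b σ| := by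
    calc (2:ℝ)^n * 1 - (2^n * (3 * 1^2))/4
        ≤ (∑ σ : Fin n → Bool, (Ssum n b σ)^2) - (∑ σ : Fin n → Bool, (Ssum n b σ)^4)/4 := by
          rw [h2]; linarith [h4]
      _ = ∑ σ : Fin n → Bool, ((Ssum n b σ)^2 - (Ssum n b σ)^4/4) := by
          rw [Finset.sum_sub_distrib, Finset.sum_div]
      _ ≤ ∑ σ : Fin n → Bool, |Ssum n b σ| := Finset.sum_le_sum fun σ _ => hpt σ
  have h2n : (0:ℝ) < 2^n := by positivity
  show (1 : ℝ)/12 ≤ (2^n : ℝ)⁻¹ * ∑ σ : Fin n → Bool, |Ssum n b σ|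
  rw [inv_mul_eq_div, le_div_iff₀ h2n]
  nlinarith [hsum, h2n.le]
end

section
/- For all n > 1 and real numbers x_1, ..., x_n, we have x_1^2 + x_2^2 + ... + x_n^2 >= (1 + 1/n^2) * (x_1 x_2 + x_2 x_3 + ... + x_{n-1} x_n). -/
open Finset

private lemma amgm (a b c x y : ℝ) (ha : 0 < a) (hb : 0 < b) (hc : 0 < c) :
    c * (x * y) ≤ c/2 * (b/a) * x^2 + c/2 * (a/b) * y^2 := by
  have h : c/2 * (b/a) * x^2 + c/2 * (a/b) * y^2 - c * (x * y)
      = c / (2*a*b) * (b*x - a*y)^2 := by field_simp; ring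
  nlinarith [mul_nonneg (by positivity : (0:ℝ) ≤ c/(2*a*b)) (sq_nonneg (b*x - a*y))]

/-- For all `n > 1` and reals `x_1,…,x_n`:
`x_1² + ⋯ + x_n² ≥ (1 + 1/n²) (x_1 x_2 + ⋯ + x_{n-1} x_n)`. -/
theorem stmt3 (n : ℕ) (hn : 1 < n) (x : ℕ → ℝ) :
    (1 + 1/(n:ℝ)^2) * ∑ i ∈ Finset.range (n-1), x i * x (i+1)
      ≤ ∑ i ∈ Finset.range n, (x i)^2 := by
  obtain ⟨m, rfl⟩ : ∃ m, n = m + 2 := ⟨n - 2, by omega⟩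
  push_cast
  set N : ℝ := (m:ℝ) + 2 with hN
  set c : ℝ := 1 + 1/N^2 with hc
  have hN2 : (2:ℝ) ≤ N := by
    have : (0:ℝ) ≤ (m:ℝ) := Nat.cast_nonneg m
    simp [hN]
  have hN0 : (0:ℝ) < N := by linarith
  have hcpos : 0 < c := by positivity
  set g : ℕ → ℝ := fun j => ((j:ℝ)+1) * (N - (j:ℝ)) with hg
  have hgpos : ∀ j, j < m + 2 → 0 < g j := by
    intro j hj
    have hjN : (j:ℝ) < N := by rw [hN]; exact_mod_cast hj
    exact mul_pos (by positivity) (by linarith)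
  -- first vertex coefficient
  have hA0 : c/2 * (g 1 / g 0) ≤ 1 := by
    have h0 : g 0 = N := by simp [hg]
    have h1 : g 1 = 2*(N-1) := by norm_num [hg]
    rw [h0, h1]
    have key : c/2 * (2*(N-1)/N) = (N^2+1)*(N-1)/N^3 := by
      rw [hc]; field_simp
    rw [key, div_le_one (by positivity)]
    nlinarith [sq_nonneg N, sq_nonneg (N-1)]
  -- last vertex coefficient
  have hBlast : c/2 * (g m / g (m+1)) ≤ 1 := by
    have h0 : g (m+1) = N := by simp [hg, hN]; ring
    have h1 : g m = 2*(N-1) := by simp [hg, hN]; ring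
    rw [h0, h1]
    have key : c/2 * (2*(N-1)/N) = (N^2+1)*(N-1)/N^3 := by
      rw [hc]; field_simp
    rw [key, div_le_one (by positivity)]
    nlinarith [sq_nonneg N, sq_nonneg (N-1)]
  -- middle vertex coefficients
  have hmid : ∀ j, j < m → c/2 * (g (j+1+1) / g (j+1)) + c/2 * (g j / g (j+1)) ≤ 1 := by
    intro j hj
    have hgj1 : 0 < g (j+1) := hgpos (j+1) (by omega)
    have e1 : g (j+1+1) + g j = 2 * g (j+1) - 2 := by
      simp only [hg]; push_cast; ring
    have e2 : c/2 * (g (j+1+1) / g (j+1)) + c/2 * (g j / g (j+1))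
        = c/2 * ((g (j+1+1) + g j) / g (j+1)) := by ring
    rw [e2, e1]
    have hgle : g (j+1) ≤ N^2 + 1 := by
      simp only [hg]
      push_cast
      nlinarith [sq_nonneg (N - 1 - 2*((j:ℝ)+1)), sq_nonneg (N-1)]
    have e3 : c/2 * ((2 * g (j+1) - 2) / g (j+1)) = c - c / g (j+1) := by
      field_simp
    rw [e3]
    have h3 : 1/N^2 ≤ c / g (j+1) := by
      rw [div_le_div_iff₀ (by positivity) hgj1]
      have : c * N^2 = N^2 + 1 := by rw [hc]; field_simp
      nlinarith
    have h4 : c - 1 = 1/N^2 := by rw [hc]; ring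
    linarith
  have step : ∀ i : ℕ, i < m + 1 →
      c * (x i * x (i+1)) ≤ c/2 * (g (i+1) / g i) * x i ^ 2 + c/2 * (g i / g (i+1)) * x (i+1) ^ 2 :=
    fun i hi => amgm (g i) (g (i+1)) c (x i) (x (i+1)) (hgpos i (by omega)) (hgpos (i+1) (by omega)) hcpos
  calc (1 + 1/N^2) * ∑ i ∈ Finset.range (m+2-1), x i * x (i+1)
      = ∑ i ∈ Finset.range (m+1), c * (x i * x (i+1)) := by
        rw [Finset.mul_sum]
        rfl
    _ ≤ ∑ i ∈ Finset.range (m+1),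
          (c/2 * (g (i+1) / g i) * x i ^ 2 + c/2 * (g i / g (i+1)) * x (i+1) ^ 2) :=
        Finset.sum_le_sum (fun i hi => step i (Finset.mem_range.mp hi))
    _ = (∑ i ∈ Finset.range (m+1), c/2 * (g (i+1) / g i) * x i ^ 2)
        + ∑ i ∈ Finset.range (m+1), c/2 * (g i / g (i+1)) * x (i+1) ^ 2 :=
        Finset.sum_add_distrib
    _ = c/2 * (g 1 / g 0) * x 0 ^ 2
        + (∑ i ∈ Finset.range m, (c/2 * (g (i+1+1) / g (i+1)) + c/2 * (g i / g (i+1))) * x (i+1) ^ 2)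
        + c/2 * (g m / g (m+1)) * x (m+1) ^ 2 := by
        rw [Finset.sum_range_succ' (fun i => c/2 * (g (i+1) / g i) * x i ^ 2) m,
            Finset.sum_range_succ (fun i => c/2 * (g i / g (i+1)) * x (i+1) ^ 2) m]
        have : ∑ i ∈ Finset.range m, (c/2 * (g (i+1+1) / g (i+1)) + c/2 * (g i / g (i+1))) * x (i+1) ^ 2
            = (∑ i ∈ Finset.range m, c/2 * (g (i+1+1) / g (i+1)) * x (i+1) ^ 2)
              + ∑ i ∈ Finset.range m, c/2 * (g i / g (i+1)) * x (i+1) ^ 2 := by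
          rw [← Finset.sum_add_distrib]
          exact Finset.sum_congr rfl fun i _ => by ring
        rw [this]; ring
    _ ≤ x 0 ^ 2 + (∑ i ∈ Finset.range m, x (i+1) ^ 2) + x (m+1) ^ 2 := by
        refine add_le_add (add_le_add ?_ ?_) ?_
        · exact mul_le_of_le_one_left (sq_nonneg _) hA0
        · exact Finset.sum_le_sum fun i hi =>
            mul_le_of_le_one_left (sq_nonneg _) (hmid i (Finset.mem_range.mp hi))
        · exact mul_le_of_le_one_left (sq_nonneg _) hBlast
    _ = ∑ i ∈ Finset.range (m+2), (x i) ^ 2 := by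
        rw [Finset.sum_range_succ (fun i => (x i)^2) (m+1),
            Finset.sum_range_succ' (fun i => (x i)^2) m]
        ring
end

section
/- Let f : {-1,1}^R -> [-1,1] with L1 norm ||f||_1 = E_x[|f(x)|] = delta. Write f = f^{=1} + f^{!=1}, where f^{=1} = sum_i \hat{f}({i}) chi_{{i}} is the linear part of the Fourier expansion and f^{!=1} is the rest. If ||f||_2^2 = E_x[f(x)^2] > (10^4 + 1) * delta^2, then ||f^{!=1}||_2^2 >= delta^2. -/
open Finset

/-- The character `χ_S` on the boolean cube `{-1,1}^R` (encoded via `Fin R → Bool`,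
with `true ↦ 1` and `false ↦ -1`). -/
noncomputable def bchi {R : ℕ} (S : Finset (Fin R)) (x : Fin R → Bool) : ℝ :=
  ∏ i ∈ S, (if x i then (1:ℝ) else -1)

/-- The Fourier coefficient `f̂(S) = E_x[f(x) χ_S(x)]` over the uniform measure. -/
noncomputable def bfourier {R : ℕ} (f : (Fin R → Bool) → ℝ) (S : Finset (Fin R)) : ℝ :=
  (2^R : ℝ)⁻¹ * ∑ x : Fin R → Bool, f x * bchi S x

/-! ### Auxiliary lemmas -/

noncomputable def bsgn (b : Bool) : ℝ := if b then 1 else -1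

lemma bchi_def {R : ℕ} (S : Finset (Fin R)) (x : Fin R → Bool) :
    bchi S x = ∏ i ∈ S, bsgn (x i) := rfl

lemma bchi_singleton {R : ℕ} (j : Fin R) (x : Fin R → Bool) :
    bchi {j} x = bsgn (x j) := by simp [bchi_def]

lemma cube_prod {R : ℕ} (F : Fin R → Bool → ℝ) :
    ∑ x : Fin R → Bool, ∏ i, F i (x i) = ∏ i, (F i true + F i false) := by
  rw [← Fintype.prod_sum]; simp

/-- Delta function over characters, summing over all sets. -/
lemma sum_chi_mul_chi {R : ℕ} (x y : Fin R → Bool) :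
    ∑ S : Finset (Fin R), bchi S x * bchi S y = if x = y then (2^R : ℝ) else 0 := by
  have h1 : ∀ S : Finset (Fin R), bchi S x * bchi S y
      = ∏ i ∈ S, (bsgn (x i) * bsgn (y i)) := by
    intro S; rw [bchi_def, bchi_def, ← prod_mul_distrib]
  simp_rw [h1]
  have h2 : ∑ S : Finset (Fin R), ∏ i ∈ S, (bsgn (x i) * bsgn (y i))
      = ∏ i, (bsgn (x i) * bsgn (y i) + 1) := by
    rw [Fintype.prod_add]; simp
  rw [h2]
  have h3 : ∀ i, bsgn (x i) * bsgn (y i) + 1 = if x i = y i then 2 else 0 := by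
    intro i; cases hx : x i <;> cases hy : y i <;> simp [bsgn] <;> norm_num
  simp_rw [h3]
  by_cases hxy : x = y
  · subst hxy; simp
  · rw [if_neg hxy]
    obtain ⟨i, hi⟩ := Function.ne_iff.mp hxy
    exact prod_eq_zero (mem_univ i) (by simp [hi])

/-- Parseval's identity on the boolean cube. -/
lemma parseval {R : ℕ} (f : (Fin R → Bool) → ℝ) :
    ∑ S : Finset (Fin R), (bfourier f S)^2 = (2^R : ℝ)⁻¹ * ∑ x : Fin R → Bool, (f x)^2 := by
  have key : ∑ S : Finset (Fin R), (∑ x : Fin R → Bool, f x * bchi S x)^2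
      = 2^R * ∑ x : Fin R → Bool, (f x)^2 := by
    simp_rw [sq, Finset.sum_mul_sum]
    rw [Finset.sum_comm]
    have : ∀ x : Fin R → Bool, ∑ S : Finset (Fin R), ∑ y : Fin R → Bool,
        (f x * bchi S x) * (f y * bchi S y)
        = 2^R * f x ^ 2 := by
      intro x
      rw [Finset.sum_comm]
      have h4 : ∀ y, ∑ S : Finset (Fin R), (f x * bchi S x) * (f y * bchi S y)
          = f x * f y * (if x = y then (2^R:ℝ) else 0) := by
        intro y
        rw [← sum_chi_mul_chi x y, Finset.mul_sum]
        apply sum_congr rfl; intro S _; ring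
      simp_rw [h4, mul_ite, mul_zero]
      rw [Finset.sum_ite_eq]
      simp [sq]; ring
    simp_rw [this]
    rw [← Finset.mul_sum]
    simp [sq]
  unfold bfourier
  simp_rw [mul_pow, ← Finset.mul_sum]
  rw [key]
  rw [← mul_assoc]
  have : ((2:ℝ)^R)⁻¹ ^2 * 2^R = (2^R:ℝ)⁻¹ := by
    rw [sq]; field_simp
  rw [this]

lemma sum_bchi {R : ℕ} (U : Finset (Fin R)) :
    ∑ x : Fin R → Bool, bchi U x = if U = ∅ then (2^R : ℝ) else 0 := by
  have h1 : ∀ x : Fin R → Bool, bchi U x = ∏ i, (if i ∈ U then bsgn (x i) else 1) := by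
    intro x; rw [bchi_def, Finset.prod_ite_mem, univ_inter]
  simp_rw [h1]
  rw [cube_prod (F := fun i b => if i ∈ U then bsgn b else 1)]
  have h2 : ∀ i : Fin R, ((if i ∈ U then bsgn true else 1) + (if i ∈ U then bsgn false else 1))
      = if i ∈ U then 0 else 2 := by
    intro i; by_cases hi : i ∈ U <;> simp [hi, bsgn] <;> norm_num
  simp_rw [h2]
  by_cases hU : U = ∅
  · subst hU; simp
  · rw [if_neg hU]
    obtain ⟨i, hi⟩ := Finset.nonempty_iff_ne_empty.mpr hU
    exact prod_eq_zero (mem_univ i) (by simp [hi])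

lemma sum_chi_singleton {R : ℕ} (j : Fin R) (S : Finset (Fin R)) :
    ∑ x : Fin R → Bool, bchi {j} x * bchi S x = if S = {j} then (2^R : ℝ) else 0 := by
  by_cases hj : j ∈ S
  · have h1 : ∀ x : Fin R → Bool, bchi {j} x * bchi S x = bchi (S.erase j) x := by
      intro x
      rw [bchi_def, bchi_def, bchi_def, prod_singleton,
        ← Finset.mul_prod_erase S _ hj, ← mul_assoc]
      have : bsgn (x j) * bsgn (x j) = 1 := by cases hx : x j <;> simp [bsgn]
      rw [this, one_mul]
    simp_rw [h1, sum_bchi]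
    congr 1
    simp only [eq_iff_iff]
    constructor
    · intro he
      have := Finset.eq_of_subset_of_card_le (t := S) (s := {j})
        (Finset.singleton_subset_iff.mpr hj) ?_
      · exact this.symm
      · have : S.card ≤ 1 := by
          have := Finset.card_erase_of_mem hj
          rw [he] at this
          simp at this
          omega
        simpa using this
    · intro hS; subst hS; simp
  · have h1 : ∀ x : Fin R → Bool, bchi {j} x * bchi S x = bchi (insert j S) x := by
      intro x
      rw [bchi_def, bchi_def, bchi_def, prod_singleton, Finset.prod_insert hj]
    simp_rw [h1, sum_bchi]
    rw [if_neg (by simp), if_neg (by rintro rfl; simp at hj)]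

lemma cube_succ {n : ℕ} (G : (Fin (n+1) → Bool) → ℝ) :
    ∑ x : Fin (n+1) → Bool, G x
      = ∑ y : Fin n → Bool, (G (Fin.cons true y) + G (Fin.cons false y)) := by
  rw [← Fintype.sum_equiv (Fin.consEquiv fun _ => Bool)
      (fun p => G (Fin.cons p.1 p.2)) G (fun p => rfl)]
  rw [Fintype.sum_prod_type]
  simp only [Fintype.sum_bool]
  exact (Finset.sum_add_distrib).symm

/-- Khintchine-type second and fourth moment identities/inequalities. -/
lemma khin : ∀ (n : ℕ) (a : Fin n → ℝ),
    (∑ x : Fin n → Bool, (∑ i, a i * bsgn (x i))^2) = 2^n * (∑ i, (a i)^2) ∧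
    (∑ x : Fin n → Bool, (∑ i, a i * bsgn (x i))^4) ≤ 3 * 2^n * (∑ i, (a i)^2)^2 := by
  intro n
  induction n with
  | zero =>
    intro a
    simp
  | succ n ih =>
    intro a
    obtain ⟨ih2, ih4⟩ := ih (fun i => a i.succ)
    have hsplit : ∀ b (y : Fin n → Bool),
        (∑ i, a i * bsgn (Fin.cons b y i)) = a 0 * bsgn b + ∑ i, a i.succ * bsgn (y i) := by
      intro b y
      rw [Fin.sum_univ_succ]
      simp [Fin.cons_zero, Fin.cons_succ]
    have hcard : (Fintype.card (Fin n → Bool) : ℝ) = 2^n := by simp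
    have hbt : bsgn true = 1 := rfl
    have hbf : bsgn false = -1 := rfl
    have ha : ∑ i : Fin (n+1), (a i)^2 = (a 0)^2 + ∑ i : Fin n, (a i.succ)^2 :=
      Fin.sum_univ_succ _
    constructor
    · rw [cube_succ (fun x => (∑ i, a i * bsgn (x i))^2)]
      simp only [hsplit, hbt, hbf]
      have : ∀ y : Fin n → Bool,
          (a 0 * 1 + ∑ i, a i.succ * bsgn (y i))^2 + (a 0 * (-1) + ∑ i, a i.succ * bsgn (y i))^2
          = 2 * (∑ i, a i.succ * bsgn (y i))^2 + 2 * (a 0)^2 := by intro y; ring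
      simp_rw [this]
      rw [sum_add_distrib, ← Finset.mul_sum, ih2, sum_const, card_univ]
      rw [ha]
      simp only [nsmul_eq_mul, hcard]
      ring
    · rw [cube_succ (fun x => (∑ i, a i * bsgn (x i))^4)]
      simp only [hsplit, hbt, hbf]
      have : ∀ y : Fin n → Bool,
          (a 0 * 1 + ∑ i, a i.succ * bsgn (y i))^4 + (a 0 * (-1) + ∑ i, a i.succ * bsgn (y i))^4
          = 2 * (∑ i, a i.succ * bsgn (y i))^4 + 12 * (a 0)^2 * (∑ i, a i.succ * bsgn (y i))^2
            + 2 * (a 0)^4 := by intro y; ring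
      simp_rw [this]
      rw [sum_add_distrib, sum_add_distrib, ← Finset.mul_sum, ← Finset.mul_sum, ih2,
        sum_const, card_univ]
      rw [ha]
      simp only [nsmul_eq_mul, hcard]
      have h2n : (0:ℝ) < 2^n := by positivity
      have hs : (0:ℝ) ≤ ∑ i : Fin n, (a i.succ)^2 := by positivity
      rw [pow_succ (2:ℝ) n]
      nlinarith [ih4, mul_nonneg h2n.le (sq_nonneg ((a 0)^2)),
        mul_nonneg h2n.le (sq_nonneg (∑ i : Fin n, (a i.succ)^2)),
        mul_nonneg (mul_nonneg h2n.le (sq_nonneg (a 0))) hs]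

lemma bfourier_g {R : ℕ} (a : Fin R → ℝ) (S : Finset (Fin R)) :
    bfourier (fun x => ∑ j, a j * bchi {j} x) S
      = ∑ j, a j * (if S = {j} then 1 else 0) := by
  unfold bfourier
  simp_rw [Finset.sum_mul, mul_assoc]
  rw [Finset.sum_comm]
  have h1 : ∀ j, ∑ x : Fin R → Bool, a j * (bchi {j} x * bchi S x)
      = a j * (if S = {j} then (2^R:ℝ) else 0) := by
    intro j; rw [← Finset.mul_sum, sum_chi_singleton]
  simp_rw [h1]
  rw [Finset.mul_sum]
  apply sum_congr rfl
  intro j _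
  by_cases hS : S = {j}
  · rw [if_pos hS, if_pos hS, mul_one, ← mul_assoc, mul_comm ((2^R:ℝ)⁻¹) (a j), mul_assoc]
    have : ((2:ℝ)^R)⁻¹ * 2^R = 1 := by field_simp
    rw [this, mul_one]
  · simp [hS]

lemma bfourier_sub {R : ℕ} (f g : (Fin R → Bool) → ℝ) (S : Finset (Fin R)) :
    bfourier (fun x => f x - g x) S = bfourier f S - bfourier g S := by
  unfold bfourier
  rw [← mul_sub, ← Finset.sum_sub_distrib]
  congr 1
  apply sum_congr rfl
  intro x _
  ring

lemma arith1 (u v δ : ℝ) (h1 : u^2 ≤ v) (h2 : v < δ^2) (h3 : 0 ≤ u) (h4 : 0 ≤ δ) :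
    u ≤ δ := by
  by_contra hlt
  push_neg at hlt
  nlinarith

lemma arith2 (F P2 Ph2 cL cLh δ : ℝ) (hsplit : F = P2 + Ph2)
    (hbig : (10^4 + 1) * δ^2 < F) (hEg : P2 ≤ 3 * cL^2) (hPh : Ph2 < δ^2)
    (htri : cL ≤ δ + cLh) (hLh : cLh ≤ δ) (hcL0 : 0 ≤ cL) (hδ0 : 0 ≤ δ) : False := by
  have h6 : cL ≤ 2*δ := by linarith
  have h7 : cL^2 ≤ (2*δ)^2 := by
    have := mul_self_le_mul_self hcL0 h6
    nlinarith [this]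
  nlinarith [sq_nonneg δ, h7]

set_option maxHeartbeats 1000000 in
/-- If `f : {-1,1}^R → [-1,1]` has `‖f‖₁ = δ` and `‖f‖₂² > (10⁴+1) δ²`, then the
non-linear Fourier mass satisfies `‖f^{≠1}‖₂² ≥ δ²`. -/
theorem stmt5 (R : ℕ) (f : (Fin R → Bool) → ℝ) (hf : ∀ x, |f x| ≤ 1) (δ : ℝ)
    (hδ : (2^R : ℝ)⁻¹ * ∑ x : Fin R → Bool, |f x| = δ)
    (h2 : (10^4 + 1) * δ^2 < (2^R : ℝ)⁻¹ * ∑ x : Fin R → Bool, (f x)^2) :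
    δ^2 ≤ ∑ S ∈ Finset.univ.filter (fun S : Finset (Fin R) => S.card ≠ 1),
      (bfourier f S)^2 := by
  classical
  by_contra hcon
  push_neg at hcon
  set c : ℝ := (2^R : ℝ)⁻¹ with hcdef
  clear_value c
  have hc : (0:ℝ) < c := by rw [hcdef]; positivity
  have hcN : c * 2^R = 1 := by rw [hcdef]; field_simp
  have hδ0 : 0 ≤ δ := by
    rw [← hδ]
    have : (0:ℝ) ≤ ∑ x : Fin R → Bool, |f x| := sum_nonneg fun x _ => abs_nonneg _
    positivity
  set a : Fin R → ℝ := fun j => bfourier f {j} with hadef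
  clear_value a
  set g : (Fin R → Bool) → ℝ := fun x => ∑ j, a j * bchi {j} x with hgdef
  clear_value g
  set h : (Fin R → Bool) → ℝ := fun x => f x - g x with hhdef
  clear_value h
  -- Fourier coefficients of g and h
  have hgS : ∀ S : Finset (Fin R), bfourier g S = if S.card = 1 then bfourier f S else 0 := by
    intro S
    rw [hgdef, bfourier_g]
    by_cases hS : S.card = 1
    · obtain ⟨j0, rfl⟩ := Finset.card_eq_one.mp hS
      rw [if_pos hS]
      rw [Finset.sum_eq_single j0]
      · simp [hadef]
      · intro j _ hj
        rw [if_neg (by simpa [Finset.singleton_inj] using (Ne.symm hj)), mul_zero]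
      · intro hj; exact absurd (mem_univ j0) hj
    · rw [if_neg hS]
      apply Finset.sum_eq_zero
      intro j _
      rw [if_neg (by rintro rfl; simp at hS), mul_zero]
  have hhS : ∀ S : Finset (Fin R), bfourier h S = if S.card = 1 then 0 else bfourier f S := by
    intro S
    rw [hhdef, bfourier_sub, hgS]
    by_cases hS : S.card = 1 <;> simp [hS]
  -- Parseval identities and the splitting of the total mass
  have Pf := parseval f
  have Pg := parseval g
  have Ph := parseval h
  rw [← hcdef] at Pf Pg Ph
  have hhmass : c * ∑ x : Fin R → Bool, (h x)^2
      = ∑ S ∈ Finset.univ.filter (fun S : Finset (Fin R) => S.card ≠ 1), (bfourier f S)^2 := by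
    rw [← Ph, Finset.sum_filter]
    apply sum_congr rfl
    intro S _
    rw [hhS]
    by_cases hS : S.card = 1 <;> simp [hS]
  have hgmass : c * ∑ x : Fin R → Bool, (g x)^2
      = ∑ S ∈ Finset.univ.filter (fun S : Finset (Fin R) => ¬ S.card ≠ 1), (bfourier f S)^2 := by
    rw [← Pg, Finset.sum_filter]
    apply sum_congr rfl
    intro S _
    rw [hgS]
    by_cases hS : S.card = 1 <;> simp [hS]
  have hfsplit : c * ∑ x : Fin R → Bool, (f x)^2
      = c * (∑ x : Fin R → Bool, (g x)^2) + c * ∑ x : Fin R → Bool, (h x)^2 := by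
    rw [← Pf, hgmass, hhmass, ← Finset.sum_filter_add_sum_filter_not Finset.univ
      (fun S : Finset (Fin R) => S.card ≠ 1) (fun S => (bfourier f S)^2)]
    ring
  -- abbreviations
  set P : ℝ := ∑ x : Fin R → Bool, (g x)^2 with hPdef
  set Q : ℝ := ∑ x : Fin R → Bool, (g x)^4 with hQdef
  set L : ℝ := ∑ x : Fin R → Bool, |g x| with hLdef
  set C3 : ℝ := ∑ x : Fin R → Bool, |g x|^3 with hC3def
  set Ph2 : ℝ := ∑ x : Fin R → Bool, (h x)^2 with hPh2def
  set Lh : ℝ := ∑ x : Fin R → Bool, |h x| with hLhdef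
  clear_value P Q L C3 Ph2 Lh
  have hP0 : 0 ≤ P := by rw [hPdef]; exact sum_nonneg fun x _ => sq_nonneg _
  have hL0 : 0 ≤ L := by rw [hLdef]; exact sum_nonneg fun x _ => abs_nonneg _
  have hLh0 : 0 ≤ Lh := by rw [hLhdef]; exact sum_nonneg fun x _ => abs_nonneg _
  have hPh20 : 0 ≤ Ph2 := by rw [hPh2def]; exact sum_nonneg fun x _ => sq_nonneg _
  -- Khintchine for g
  have hgx : ∀ x, g x = ∑ j, a j * bsgn (x j) := by
    intro x
    rw [hgdef]
    exact sum_congr rfl fun j _ => by rw [bchi_singleton]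
  obtain ⟨K2, K4⟩ := khin R a
  have hK2 : P = 2^R * ∑ j, (a j)^2 := by
    rw [hPdef, ← K2]; exact sum_congr rfl fun x _ => by rw [hgx]
  have hK4 : Q ≤ 3 * 2^R * (∑ j, (a j)^2)^2 := by
    rw [hQdef]
    calc ∑ x : Fin R → Bool, (g x)^4
        = ∑ x : Fin R → Bool, (∑ j, a j * bsgn (x j))^4 :=
          sum_congr rfl fun x _ => by rw [hgx]
      _ ≤ 3 * 2^R * (∑ j, (a j)^2)^2 := K4
  have hQP : Q ≤ 3 * c * P^2 := by
    have he : 3 * c * (2^R * ∑ j, (a j)^2)^2 = 3 * 2^R * (∑ j, (a j)^2)^2 * (c * 2^R) := by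
      ring
    rw [hK2, he, hcN, mul_one]
    exact hK4
  -- Cauchy-Schwarz inequalities
  have cs1 : P^2 ≤ L * C3 := by
    have e1 : ∀ x : Fin R → Bool, (g x)^2
        = Real.sqrt |g x| * (Real.sqrt |g x| * |g x|) := by
      intro x
      rw [← mul_assoc, Real.mul_self_sqrt (abs_nonneg _), ← sq_abs]
      ring
    calc P^2 = (∑ x : Fin R → Bool, Real.sqrt |g x| * (Real.sqrt |g x| * |g x|))^2 := by
          rw [hPdef, sum_congr rfl fun x _ => e1 x]
      _ ≤ (∑ x : Fin R → Bool, (Real.sqrt |g x|)^2)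
          * (∑ x : Fin R → Bool, (Real.sqrt |g x| * |g x|)^2) :=
          sum_mul_sq_le_sq_mul_sq _ _ _
      _ = L * C3 := by
          rw [hLdef, hC3def]
          congr 1
          · exact sum_congr rfl fun x _ => Real.sq_sqrt (abs_nonneg _)
          · apply sum_congr rfl; intro x _
            rw [mul_pow, Real.sq_sqrt (abs_nonneg _)]
            ring
  have cs2 : C3^2 ≤ P * Q := by
    have e1 : ∀ x : Fin R → Bool, |g x|^3 = |g x| * (g x)^2 := by
      intro x; rw [← sq_abs]; ring
    calc C3^2 = (∑ x : Fin R → Bool, |g x| * (g x)^2)^2 := by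
          rw [hC3def, sum_congr rfl fun x _ => e1 x]
      _ ≤ (∑ x : Fin R → Bool, |g x|^2) * (∑ x : Fin R → Bool, ((g x)^2)^2) :=
          sum_mul_sq_le_sq_mul_sq _ _ _
      _ = P * Q := by
          rw [hPdef, hQdef]
          congr 1
          · exact sum_congr rfl fun x _ => sq_abs _
          · apply sum_congr rfl; intro x _; ring
  have csh : Lh^2 ≤ (2^R : ℝ) * Ph2 := by
    have h0 := sum_mul_sq_le_sq_mul_sq Finset.univ
      (fun _ : Fin R → Bool => (1:ℝ)) (fun x => |h x|)
    simp only [one_mul, one_pow, sum_const, card_univ, nsmul_eq_mul, mul_one, sq_abs] at h0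
    have hce : (Fintype.card (Fin R → Bool) : ℝ) = 2^R := by simp
    rw [hLhdef, hPh2def]
    rw [hce] at h0
    exact h0
  -- key: P ≤ 3 c L²
  have key : P ≤ 3 * c * L^2 := by
    rcases eq_or_lt_of_le hP0 with h0 | hPpos
    · rw [← h0]; positivity
    · have h1 : P^4 ≤ L^2 * (P * Q) := by
        calc P^4 = (P^2)^2 := by ring
          _ ≤ (L * C3)^2 := pow_le_pow_left₀ (sq_nonneg P) cs1 2
          _ = L^2 * C3^2 := by ring
          _ ≤ L^2 * (P * Q) := mul_le_mul_of_nonneg_left cs2 (sq_nonneg L)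
      have h2' : L^2 * (P * Q) ≤ L^2 * (P * (3 * c * P^2)) :=
        mul_le_mul_of_nonneg_left (mul_le_mul_of_nonneg_left hQP hP0) (sq_nonneg L)
      have e1 : L^2 * (P * (3 * c * P^2)) = (3 * c * L^2) * P^3 := by ring
      have e2 : P * P^3 = P^4 := by ring
      have h3 : P * P^3 ≤ (3 * c * L^2) * P^3 := by
        rw [e2]; rw [e1] at h2'; linarith
      exact le_of_mul_le_mul_right h3 (pow_pos hPpos 3)
  -- translate to expectations
  have hEg : c * P ≤ 3 * (c * L)^2 := by
    have h' := mul_le_mul_of_nonneg_left key hc.le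
    have e : c * (3 * c * L^2) = 3 * (c * L)^2 := by ring
    linarith [h', e]
  -- h is small in L1
  have hPh2small : c * Ph2 < δ^2 := by rw [hhmass]; exact hcon
  have hLh2 : (c * Lh)^2 ≤ c * Ph2 := by
    have h2' : c^2 * Lh^2 ≤ c^2 * ((2^R:ℝ) * Ph2) :=
      mul_le_mul_of_nonneg_left csh (sq_nonneg c)
    have e : c^2 * ((2^R:ℝ) * Ph2) = (c * Ph2) * (c * 2^R) := by ring
    rw [e, hcN, mul_one] at h2'
    calc (c * Lh)^2 = c^2 * Lh^2 := by ring
      _ ≤ c * Ph2 := h2'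
  have hLhδ : c * Lh ≤ δ :=
    arith1 (c * Lh) (c * Ph2) δ hLh2 hPh2small (mul_nonneg hc.le hLh0) hδ0
  -- triangle inequality : L ≤ ∑|f| + Lh
  have htri : c * L ≤ δ + c * Lh := by
    have h1 : L ≤ (∑ x : Fin R → Bool, |f x|) + Lh := by
      rw [hLdef, hLhdef, ← Finset.sum_add_distrib]
      apply sum_le_sum
      intro x _
      have : g x = f x - h x := by rw [hhdef]; ring
      rw [this]
      exact abs_sub _ _
    calc c * L ≤ c * ((∑ x : Fin R → Bool, |f x|) + Lh) :=
          mul_le_mul_of_nonneg_left h1 hc.le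
      _ = c * (∑ x : Fin R → Bool, |f x|) + c * Lh := by ring
      _ = δ + c * Lh := by rw [hδ]
  -- conclusion
  have hcL0 : 0 ≤ c * L := mul_nonneg hc.le hL0
  exact arith2 (c * ∑ x : Fin R → Bool, (f x)^2) (c * P) (c * Ph2) (c * L) (c * Lh) δ
    hfsplit h2 hEg hPh2small htri hLhδ hcL0 hδ0
end

section
/- Let gamma_1, ..., gamma_m be real numbers in [0,1], not all zero, let M >= 2 and epsilon = 1/M, with m large. Then (- sum_{i=1}^m gamma_i^2 M^{2i} + (1+2*epsilon) * sum_{i=1}^{m-1} gamma_i gamma_{i+1} M^{2i+1}) / (sum_{i=1}^m gamma_i M^{2i}) < 1 / M^{sqrt(m)/4}. -/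
open Finset

private lemma geomIoc (x : ℝ) (a n : ℕ) :
    (x - 1) * ∑ i ∈ Finset.Ioc a (a + n), x ^ i = x ^ (a + n + 1) - x ^ (a + 1) := by
  induction n with
  | zero => simp
  | succ n ih =>
    rw [show a + (n+1) = (a+n) + 1 by ring, Finset.sum_Ioc_succ_top (Nat.le_add_right a n)]
    rw [mul_add, ih]; ring

private lemma uvBound (B u v : ℕ) (hu : 1 ≤ u) (hv : 1 ≤ v) (h : u + v ≤ 2*B+3) :
    (u:ℝ) * v ≤ ((B:ℝ)+1) * ((B:ℝ)+2) := by
  have hsum' : (u:ℝ) + v ≤ 2*(B:ℝ)+3 := by exact_mod_cast h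
  have hu' : (1:ℝ) ≤ u := by exact_mod_cast hu
  have hv' : (1:ℝ) ≤ v := by exact_mod_cast hv
  rcases le_or_gt u (B+1) with h1 | h1
  · have h1' : (u:ℝ) ≤ (B:ℝ)+1 := by exact_mod_cast h1
    nlinarith [mul_nonneg (by linarith : (0:ℝ) ≤ (u:ℝ)) (by linarith : (0:ℝ) ≤ 2*(B:ℝ)+3 - u - v),
      mul_nonneg (sub_nonneg.2 h1') (sub_nonneg.2 (by linarith : (u:ℝ) ≤ (B:ℝ)+2))]
  · have h2 : v ≤ B+1 := by omega
    have h2' : (v:ℝ) ≤ (B:ℝ)+1 := by exact_mod_cast h2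
    nlinarith [mul_nonneg (by linarith : (0:ℝ) ≤ (v:ℝ)) (by linarith : (0:ℝ) ≤ 2*(B:ℝ)+3 - u - v),
      mul_nonneg (sub_nonneg.2 h2') (sub_nonneg.2 (by linarith : (v:ℝ) ≤ (B:ℝ)+2))]

set_option maxHeartbeats 2000000 in
private lemma scheme (M m B : ℕ) (hM : 2 ≤ M) (hm1 : 1 ≤ m) (hB : 1 ≤ B)
    (γ : ℕ → ℝ) (hγ : ∀ i ∈ Finset.Icc 1 m, 0 ≤ γ i ∧ γ i ≤ 1) :
    (-(∑ i ∈ Finset.Icc 1 m, (γ i)^2 * (M : ℝ)^(2*i)) +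
        (1 + 2*(1/(M:ℝ))) * ∑ i ∈ Finset.Icc 1 (m-1), γ i * γ (i+1) * (M : ℝ)^(2*i+1))
    ≤ ((1 + 2*(1/(M:ℝ)))*(M:ℝ)^3/(((M:ℝ)^2-1)*(M:ℝ)^(2*(B+1)))
        + (1 + 2*(1/(M:ℝ)))*(M:ℝ)/(((M:ℝ)^2-1)*(M:ℝ)^(2*B))
        + max (2*(1/(M:ℝ)) - (1 + 2*(1/(M:ℝ)))/(((B:ℝ)+1)*((B:ℝ)+2))) 0)
      * (∑ i ∈ Finset.Icc 1 m, γ i * (M : ℝ)^(2*i)) := by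
  classical
  have hM2 : (2:ℝ) ≤ M := by exact_mod_cast hM
  have hM0 : (0:ℝ) < M := by linarith
  have hMsq : (0:ℝ) < (M:ℝ)^2 - 1 := by nlinarith
  set c : ℝ := 1 + 2*(1/(M:ℝ)) with hc
  have hc0 : (0:ℝ) < c := by rw [hc]; positivity
  set F : ℝ := ((B:ℝ)+1)*((B:ℝ)+2) with hF
  have hF1 : (1:ℝ) ≤ F := by rw [hF]; nlinarith [Nat.cast_nonneg (α := ℝ) B]
  set a : ℕ → ℝ := fun i => if i ∈ Finset.Icc 1 m then γ i * (M:ℝ)^i else 0 with ha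
  have ha0 : ∀ i, 0 ≤ a i := by
    intro i; simp only [ha]; split
    · exact mul_nonneg (hγ i ‹_›).1 (by positivity)
    · exact le_refl 0
  have haM : ∀ i, a i ≤ (M:ℝ)^i := by
    intro i; simp only [ha]; split
    · calc γ i * (M:ℝ)^i ≤ 1 * (M:ℝ)^i := by
            apply mul_le_mul_of_nonneg_right (hγ i ‹_›).2 (by positivity)
        _ = (M:ℝ)^i := one_mul _
    · positivity
  have hasq : ∀ i, (a i)^2 ≤ a i * (M:ℝ)^i := by
    intro i
    calc (a i)^2 = a i * a i := sq (a i) ▸ by ring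
      _ ≤ a i * (M:ℝ)^i := mul_le_mul_of_nonneg_left (haM i) (ha0 i)
  have haz : ∀ i, m < i → a i = 0 := by
    intro i hi; simp only [ha]; rw [if_neg]; simp only [Finset.mem_Icc]; omega
  have hav : ∀ i ∈ Finset.Icc 1 m, a i = γ i * (M:ℝ)^i := by
    intro i hi; simp only [ha]; rw [if_pos hi]
  obtain ⟨k, hk_mem, hk_max⟩ := Finset.exists_max_image (Finset.Icc 1 m)
    (fun i => γ i * (M:ℝ)^(2*i)) ⟨1, by simp [Finset.mem_Icc]; omega⟩
  set P := γ k * (M:ℝ)^(2*k) with hP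
  have hP0 : (0:ℝ) ≤ P := mul_nonneg (hγ k hk_mem).1 (by positivity)
  have hPa : ∀ i, a i * (M:ℝ)^i ≤ P := by
    intro i; simp only [ha]; split
    · rename_i hi
      have e : γ i * (M:ℝ)^i * (M:ℝ)^i = γ i * (M:ℝ)^(2*i) := by
        rw [two_mul, pow_add]; ring
      rw [e]; exact hk_max i hi
    · simpa using hP0
  have hex : ∃ j, P ≤ (M:ℝ)^(2*j) := by
    refine ⟨k, ?_⟩
    calc P = γ k * (M:ℝ)^(2*k) := rfl
      _ ≤ 1 * (M:ℝ)^(2*k) := mul_le_mul_of_nonneg_right (hγ k hk_mem).2 (by positivity)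
      _ = (M:ℝ)^(2*k) := one_mul _
  set T := Nat.find hex with hT
  have hTP : P ≤ (M:ℝ)^(2*T) := Nat.find_spec hex
  have hTlt : ∀ j, j < T → (M:ℝ)^(2*j) < P := fun j hj => lt_of_not_ge (Nat.find_min hex hj)
  set A := B + 1 with hA
  set s := max 1 (T - A) with hs
  set R := T + B with hR
  set K := m + R + 1 with hK
  have hs1 : 1 ≤ s := le_max_left _ _
  have hs2 : T - A ≤ s := le_max_right _ _
  have hsR : s ≤ R := by
    rw [hs]; apply max_le <;> omega
  have hscase : s = 1 ∨ (s = T - A ∧ A + 2 ≤ T) := by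
    rcases le_or_gt (T - A) 1 with h | h
    · left; rw [hs]; exact max_eq_left h
    · right; exact ⟨by rw [hs]; exact max_eq_right h.le, by omega⟩
  have hRs : R ≤ s + 2*B + 1 := by omega
  clear_value T s R K
  -- sums over extended range
  set SQ := ∑ i ∈ Finset.Ioc 0 K, (a i)^2 with hSQdef
  set CR := ∑ i ∈ Finset.Ioc 0 (K-1), a i * a (i+1) with hCRdef
  set DD := ∑ i ∈ Finset.Ioc 0 K, a i * (M:ℝ)^i with hDDdef
  have hIcc : ∀ (X : ℕ), Finset.Icc 1 X = Finset.Ioc 0 X := fun X => Finset.Icc_add_one_left_eq_Ioc 0 X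
  have hsq_eq : ∑ i ∈ Finset.Icc 1 m, (γ i)^2 * (M:ℝ)^(2*i) = SQ := by
    have e1 : ∑ i ∈ Finset.Icc 1 m, (γ i)^2 * (M:ℝ)^(2*i) = ∑ i ∈ Finset.Ioc 0 m, (a i)^2 := by
      rw [← hIcc m]; apply Finset.sum_congr rfl; intro i hi
      rw [hav i hi]; ring
    rw [e1, hSQdef]
    apply Finset.sum_subset (Finset.Ioc_subset_Ioc_right (by omega))
    intro i h1 h2
    simp only [Finset.mem_Ioc] at h1 h2
    rw [haz i (by omega)]; ring
  have hcr_eq : ∑ i ∈ Finset.Icc 1 (m-1), γ i * γ (i+1) * (M:ℝ)^(2*i+1) = CR := by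
    have e1 : ∑ i ∈ Finset.Icc 1 (m-1), γ i * γ (i+1) * (M:ℝ)^(2*i+1)
        = ∑ i ∈ Finset.Ioc 0 (m-1), a i * a (i+1) := by
      rw [← hIcc (m-1)]; apply Finset.sum_congr rfl; intro i hi
      simp only [Finset.mem_Icc] at hi
      rw [hav i (by simp only [Finset.mem_Icc]; omega), hav (i+1) (by simp only [Finset.mem_Icc]; omega)]
      ring
    rw [e1, hCRdef]
    apply Finset.sum_subset (Finset.Ioc_subset_Ioc_right (by omega))
    intro i h1 h2
    simp only [Finset.mem_Ioc] at h1 h2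
    rw [haz (i+1) (by omega)]; ring
  have hdd_eq : ∑ i ∈ Finset.Icc 1 m, γ i * (M:ℝ)^(2*i) = DD := by
    have e1 : ∑ i ∈ Finset.Icc 1 m, γ i * (M:ℝ)^(2*i) = ∑ i ∈ Finset.Ioc 0 m, a i * (M:ℝ)^i := by
      rw [← hIcc m]; apply Finset.sum_congr rfl; intro i hi
      rw [hav i hi]; ring
    rw [e1, hDDdef]
    apply Finset.sum_subset (Finset.Ioc_subset_Ioc_right (by omega))
    intro i h1 h2
    simp only [Finset.mem_Ioc] at h1 h2
    rw [haz i (by omega)]; ring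
  -- range splits
  have hsplit1 : SQ = (∑ i ∈ Finset.Ioc 0 (s-1), (a i)^2) + (∑ i ∈ Finset.Ioc (s-1) R, (a i)^2)
      + ∑ i ∈ Finset.Ioc R K, (a i)^2 := by
    rw [hSQdef,
      ← Finset.sum_Ioc_consecutive (fun i => (a i)^2) (show 0 ≤ R by omega) (show R ≤ K by omega),
      ← Finset.sum_Ioc_consecutive (fun i => (a i)^2) (show 0 ≤ s-1 by omega) (show s-1 ≤ R by omega)]
  have hsplit2 : CR = (∑ i ∈ Finset.Ioc 0 (s-1), a i * a (i+1))
      + (∑ i ∈ Finset.Ioc (s-1) (R-1), a i * a (i+1))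
      + ∑ i ∈ Finset.Ioc (R-1) (K-1), a i * a (i+1) := by
    rw [hCRdef,
      ← Finset.sum_Ioc_consecutive (fun i => a i * a (i+1)) (show 0 ≤ R-1 by omega) (show R-1 ≤ K-1 by omega),
      ← Finset.sum_Ioc_consecutive (fun i => a i * a (i+1)) (show 0 ≤ s-1 by omega) (show s-1 ≤ R-1 by omega)]
  -- LEFT REGION
  have hQL : -(∑ i ∈ Finset.Ioc 0 (s-1), (a i)^2) + c * ∑ i ∈ Finset.Ioc 0 (s-1), a i * a (i+1)
      ≤ c*(M:ℝ)^3/(((M:ℝ)^2-1)*(M:ℝ)^(2*A)) * P := by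
    rcases hscase with hcase | ⟨hcase, hTA⟩
    · rw [hcase]
      simp only [show (1:ℕ)-1 = 0 from rfl, Finset.Ioc_self, Finset.sum_empty]
      have : (0:ℝ) ≤ c*(M:ℝ)^3/(((M:ℝ)^2-1)*(M:ℝ)^(2*A)) * P := by positivity
      linarith
    · have hcross : ∀ i ∈ Finset.Ioc 0 (s-1), a i * a (i+1) ≤ (M:ℝ)*((M:ℝ)^2)^i := by
        intro i _
        calc a i * a (i+1) ≤ (M:ℝ)^i * (M:ℝ)^(i+1) :=
              mul_le_mul (haM i) (haM (i+1)) (ha0 _) (by positivity)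
          _ = (M:ℝ)*((M:ℝ)^2)^i := by ring
      have h1 : ∑ i ∈ Finset.Ioc 0 (s-1), a i * a (i+1)
          ≤ (M:ℝ) * ∑ i ∈ Finset.Ioc 0 (s-1), ((M:ℝ)^2)^i := by
        rw [Finset.mul_sum]; exact Finset.sum_le_sum hcross
      have hgeom : (∑ i ∈ Finset.Ioc 0 (s-1), ((M:ℝ)^2)^i) * ((M:ℝ)^2 - 1) ≤ ((M:ℝ)^2)^s := by
        have hid := geomIoc ((M:ℝ)^2) 0 (s-1)
        rw [zero_add, show s-1+1 = s by omega, zero_add, pow_one] at hid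
        calc (∑ i ∈ Finset.Ioc 0 (s-1), ((M:ℝ)^2)^i) * ((M:ℝ)^2 - 1)
            = ((M:ℝ)^2-1) * ∑ i ∈ Finset.Ioc 0 (s-1), ((M:ℝ)^2)^i := by ring
          _ = ((M:ℝ)^2)^s - (M:ℝ)^2 := hid
          _ ≤ ((M:ℝ)^2)^s := sub_le_self _ (by positivity)
      have hkey : ((M:ℝ)^2)^s * (M:ℝ)^(2*A) ≤ P * (M:ℝ)^2 := by
        have hlt := hTlt (T-1) (by omega)
        have e1 : ((M:ℝ)^2)^s * (M:ℝ)^(2*A) = (M:ℝ)^(2*(T-1)) * (M:ℝ)^2 := by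
          rw [← pow_mul, ← pow_add, ← pow_add]; congr 1; omega
        rw [e1]
        exact mul_le_mul_of_nonneg_right hlt.le (by positivity)
      have hsum_le : ∑ i ∈ Finset.Ioc 0 (s-1), ((M:ℝ)^2)^i
          ≤ P * (M:ℝ)^2 / (((M:ℝ)^2-1) * (M:ℝ)^(2*A)) := by
        rw [le_div_iff₀ (by positivity)]
        calc (∑ i ∈ Finset.Ioc 0 (s-1), ((M:ℝ)^2)^i) * (((M:ℝ)^2-1) * (M:ℝ)^(2*A))
            = ((∑ i ∈ Finset.Ioc 0 (s-1), ((M:ℝ)^2)^i) * ((M:ℝ)^2-1)) * (M:ℝ)^(2*A) := by ring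
          _ ≤ ((M:ℝ)^2)^s * (M:ℝ)^(2*A) :=
              mul_le_mul_of_nonneg_right hgeom (by positivity)
          _ ≤ P * (M:ℝ)^2 := hkey
      have hsq0 : (0:ℝ) ≤ ∑ i ∈ Finset.Ioc 0 (s-1), (a i)^2 :=
        Finset.sum_nonneg (fun i _ => sq_nonneg _)
      calc -(∑ i ∈ Finset.Ioc 0 (s-1), (a i)^2) + c * ∑ i ∈ Finset.Ioc 0 (s-1), a i * a (i+1)
          ≤ c * ∑ i ∈ Finset.Ioc 0 (s-1), a i * a (i+1) := by linarith
        _ ≤ c * ((M:ℝ) * ∑ i ∈ Finset.Ioc 0 (s-1), ((M:ℝ)^2)^i) :=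
            mul_le_mul_of_nonneg_left h1 hc0.le
        _ ≤ c * ((M:ℝ) * (P * (M:ℝ)^2 / (((M:ℝ)^2-1) * (M:ℝ)^(2*A)))) := by
            apply mul_le_mul_of_nonneg_left _ hc0.le
            exact mul_le_mul_of_nonneg_left hsum_le hM0.le
        _ = c*(M:ℝ)^3/(((M:ℝ)^2-1)*(M:ℝ)^(2*A)) * P := by
            field_simp
  -- RIGHT REGION
  have hQR : -(∑ i ∈ Finset.Ioc R K, (a i)^2) + c * ∑ i ∈ Finset.Ioc (R-1) (K-1), a i * a (i+1)
      ≤ c*(M:ℝ)/(((M:ℝ)^2-1)*(M:ℝ)^(2*B)) * P := by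
    have hcross : ∀ i ∈ Finset.Ioc (R-1) (K-1), a i * a (i+1) ≤ (P^2/(M:ℝ)) * (1/(M:ℝ)^2)^i := by
      intro i _
      have h1 : a i ≤ P / (M:ℝ)^i := by
        rw [le_div_iff₀ (by positivity)]; exact hPa i
      have h2 : a (i+1) ≤ P / (M:ℝ)^(i+1) := by
        rw [le_div_iff₀ (by positivity)]; exact hPa (i+1)
      calc a i * a (i+1) ≤ (P/(M:ℝ)^i) * (P/(M:ℝ)^(i+1)) :=
            mul_le_mul h1 h2 (ha0 _) (by positivity)
        _ = (P^2/(M:ℝ)) * (1/(M:ℝ)^2)^i := by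
            rw [div_pow, one_pow]
            field_simp
            ring
    have h1 : ∑ i ∈ Finset.Ioc (R-1) (K-1), a i * a (i+1)
        ≤ (P^2/(M:ℝ)) * ∑ i ∈ Finset.Ioc (R-1) (K-1), (1/(M:ℝ)^2)^i := by
      rw [Finset.mul_sum]; exact Finset.sum_le_sum hcross
    have hgeom : (∑ i ∈ Finset.Ioc (R-1) (K-1), (1/(M:ℝ)^2)^i) * (1 - 1/(M:ℝ)^2)
        ≤ (1/(M:ℝ)^2)^R := by
      have hid := geomIoc (1/(M:ℝ)^2) (R-1) (K-R)
      rw [show R-1+(K-R) = K-1 by omega] at hid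
      rw [show K-1+1 = K by omega, show R-1+1 = R by omega] at hid
      have hx0 : (0:ℝ) ≤ (1/(M:ℝ)^2)^K := by positivity
      calc (∑ i ∈ Finset.Ioc (R-1) (K-1), (1/(M:ℝ)^2)^i) * (1 - 1/(M:ℝ)^2)
          = -((1/(M:ℝ)^2 - 1) * ∑ i ∈ Finset.Ioc (R-1) (K-1), (1/(M:ℝ)^2)^i) := by ring
        _ = -((1/(M:ℝ)^2)^K - (1/(M:ℝ)^2)^R) := by rw [hid]
        _ = (1/(M:ℝ)^2)^R - (1/(M:ℝ)^2)^K := by ring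
        _ ≤ (1/(M:ℝ)^2)^R := sub_le_self _ hx0
    have hgs0 : (0:ℝ) ≤ ∑ i ∈ Finset.Ioc (R-1) (K-1), (1/(M:ℝ)^2)^i :=
      Finset.sum_nonneg (fun i _ => by positivity)
    have hx1 : (0:ℝ) < 1 - 1/(M:ℝ)^2 := by
      rw [sub_pos, div_lt_one (by positivity)]; nlinarith
    have hsum_le : ∑ i ∈ Finset.Ioc (R-1) (K-1), (1/(M:ℝ)^2)^i
        ≤ (1/(M:ℝ)^2)^R / (1 - 1/(M:ℝ)^2) := by
      rw [le_div_iff₀ hx1]; exact hgeom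
    have hfinal : (P^2/(M:ℝ)) * ((1/(M:ℝ)^2)^R / (1 - 1/(M:ℝ)^2))
        ≤ (M:ℝ)/(((M:ℝ)^2-1)*(M:ℝ)^(2*B)) * P := by
      have e1 : (1/(M:ℝ)^2)^R = 1/((M:ℝ)^(2*T) * (M:ℝ)^(2*B)) := by
        rw [div_pow, one_pow, ← pow_mul, ← pow_add]
        congr 2
        omega
      rw [e1]
      have hP2 : P^2 ≤ P * (M:ℝ)^(2*T) := by
        rw [sq]; exact mul_le_mul_of_nonneg_left hTP hP0
      have hMne : (M:ℝ) ≠ 0 := ne_of_gt hM0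
      have hM2ne : ((M:ℝ)^2 - 1) ≠ 0 := ne_of_gt hMsq
      have hTne : ((M:ℝ)^(2*T)) ≠ 0 := by positivity
      have hBne : ((M:ℝ)^(2*B)) ≠ 0 := by positivity
      have e3 : (P^2/(M:ℝ)) * ((1/((M:ℝ)^(2*T) * (M:ℝ)^(2*B))) / (1 - 1/(M:ℝ)^2))
          = P^2*(M:ℝ)/((M:ℝ)^(2*T) * (M:ℝ)^(2*B) * ((M:ℝ)^2-1)) := by
        field_simp
      have e4 : (M:ℝ)/(((M:ℝ)^2-1)*(M:ℝ)^(2*B)) * P = (M:ℝ)*P/(((M:ℝ)^2-1)*(M:ℝ)^(2*B)) := by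
        ring
      rw [e3, e4, div_le_div_iff₀ (by positivity) (by positivity)]
      calc P^2*(M:ℝ) * (((M:ℝ)^2-1)*(M:ℝ)^(2*B))
          = P^2 * ((M:ℝ)*(((M:ℝ)^2-1)*(M:ℝ)^(2*B))) := by ring
        _ ≤ (P * (M:ℝ)^(2*T)) * ((M:ℝ)*(((M:ℝ)^2-1)*(M:ℝ)^(2*B))) :=
            mul_le_mul_of_nonneg_right hP2 (by positivity)
        _ = (M:ℝ)*P*((M:ℝ)^(2*T) * (M:ℝ)^(2*B) * ((M:ℝ)^2-1)) := by ring
    have hsq0 : (0:ℝ) ≤ ∑ i ∈ Finset.Ioc R K, (a i)^2 :=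
      Finset.sum_nonneg (fun i _ => sq_nonneg _)
    calc -(∑ i ∈ Finset.Ioc R K, (a i)^2) + c * ∑ i ∈ Finset.Ioc (R-1) (K-1), a i * a (i+1)
        ≤ c * ∑ i ∈ Finset.Ioc (R-1) (K-1), a i * a (i+1) := by linarith
      _ ≤ c * ((P^2/(M:ℝ)) * ∑ i ∈ Finset.Ioc (R-1) (K-1), (1/(M:ℝ)^2)^i) :=
          mul_le_mul_of_nonneg_left h1 hc0.le
      _ ≤ c * ((P^2/(M:ℝ)) * ((1/(M:ℝ)^2)^R / (1 - 1/(M:ℝ)^2))) := by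
          apply mul_le_mul_of_nonneg_left _ hc0.le
          exact mul_le_mul_of_nonneg_left hsum_le (by positivity)
      _ ≤ c * ((M:ℝ)/(((M:ℝ)^2-1)*(M:ℝ)^(2*B)) * P) :=
          mul_le_mul_of_nonneg_left hfinal hc0.le
      _ = c*(M:ℝ)/(((M:ℝ)^2-1)*(M:ℝ)^(2*B)) * P := by ring
  -- WINDOW REGION
  set κ : ℝ := 2*(1/(M:ℝ)) - c/F with hκ
  have hQW : -(∑ j ∈ Finset.Ioc (s-1) R, (a j)^2) + c * ∑ j ∈ Finset.Ioc (s-1) (R-1), a j * a (j+1)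
      ≤ (max κ 0) * DD := by
    set f : ℕ → ℝ := fun j => ((j:ℝ) - (s:ℝ) + 1) * ((R:ℝ) + 1 - (j:ℝ)) with hfdef
    have hf1 : ∀ j, s ≤ j → j ≤ R → 1 ≤ f j := by
      intro j h1 h2
      have c1 : (s:ℝ) ≤ (j:ℝ) := Nat.cast_le.mpr h1
      have c2 : (j:ℝ) ≤ (R:ℝ) := Nat.cast_le.mpr h2
      simp only [hfdef]
      nlinarith [c1, c2]
    have hfF : ∀ j, s ≤ j → j ≤ R → f j ≤ F := by
      intro j h1 h2
      have e1 : f j = ((j+1-s : ℕ):ℝ) * ((R+1-j : ℕ):ℝ) := by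
        simp only [hfdef]
        rw [Nat.cast_sub (by omega), Nat.cast_sub (by omega)]
        push_cast; ring
      rw [e1, hF]
      exact uvBound B _ _ (by omega) (by omega) (by omega)
    have hfid : ∀ j, 1 ≤ j → f (j+1) + f (j-1) = 2 * f j - 2 := by
      intro j hj
      simp only [hfdef]
      rw [Nat.cast_sub hj]
      push_cast; ring
    have hedge : ∀ j ∈ Finset.Ioc (s-1) (R-1),
        a j * a (j+1) ≤ (f (j+1)/ f j * (a j)^2 + f j / f (j+1) * (a (j+1))^2)/2 := by
      intro j hj
      simp only [Finset.mem_Ioc] at hj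
      have hjs : s ≤ j := by omega
      have hjR : j ≤ R := by omega
      have hj1R : j + 1 ≤ R := by omega
      have hp : (0:ℝ) < f j := lt_of_lt_of_le zero_lt_one (hf1 j hjs hjR)
      have hq : (0:ℝ) < f (j+1) := lt_of_lt_of_le zero_lt_one (hf1 (j+1) (by omega) hj1R)
      have key : (f (j+1)/ f j * (a j)^2 + f j / f (j+1) * (a (j+1))^2)/2 - a j * a (j+1)
          = (f (j+1) * a j - f j * a (j+1))^2 / (2 * (f j * f (j+1))) := by
        field_simp
        ring
      have hnn : (0:ℝ) ≤ (f (j+1) * a j - f j * a (j+1))^2 / (2 * (f j * f (j+1))) :=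
        div_nonneg (sq_nonneg _) (by positivity)
      linarith [key ▸ hnn]
    have hsum1 : ∑ j ∈ Finset.Ioc (s-1) (R-1), a j * a (j+1)
        ≤ (∑ j ∈ Finset.Ioc (s-1) (R-1),
            (f (j+1)/ f j * (a j)^2 + f j / f (j+1) * (a (j+1))^2))/2 := by
      calc ∑ j ∈ Finset.Ioc (s-1) (R-1), a j * a (j+1)
          ≤ ∑ j ∈ Finset.Ioc (s-1) (R-1),
              (f (j+1)/ f j * (a j)^2 + f j / f (j+1) * (a (j+1))^2)/2 :=
            Finset.sum_le_sum hedge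
        _ = (∑ j ∈ Finset.Ioc (s-1) (R-1),
              (f (j+1)/ f j * (a j)^2 + f j / f (j+1) * (a (j+1))^2))/2 := by
            rw [← Finset.sum_div]
    have hsplitf : ∑ j ∈ Finset.Ioc (s-1) (R-1),
          (f (j+1)/ f j * (a j)^2 + f j / f (j+1) * (a (j+1))^2)
        = (∑ j ∈ Finset.Ioc (s-1) (R-1), f (j+1)/ f j * (a j)^2)
          + ∑ j ∈ Finset.Ioc (s-1) (R-1), f j / f (j+1) * (a (j+1))^2 :=
      Finset.sum_add_distrib
    have hfR1 : f (R+1) = 0 := by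
      simp only [hfdef]; push_cast; ring
    have hfs1 : f (s-1) = 0 := by
      simp only [hfdef]; rw [Nat.cast_sub (by omega : 1 ≤ s)]; push_cast; ring
    have hpart1 : ∑ j ∈ Finset.Ioc (s-1) (R-1), f (j+1)/ f j * (a j)^2
        ≤ ∑ j ∈ Finset.Ioc (s-1) R, f (j+1)/ f j * (a j)^2 := by
      apply Finset.sum_le_sum_of_subset_of_nonneg (Finset.Ioc_subset_Ioc_right (by omega))
      intro j hjW hjE
      simp only [Finset.mem_Ioc] at hjW hjE
      have hjR : j = R := by omega
      rw [hjR, hfR1]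
      simp
    have hre : ∑ j ∈ Finset.Ioc (s-1) (R-1), f j / f (j+1) * (a (j+1))^2
        = ∑ j ∈ Finset.Ioc s R, f (j-1) / f j * (a j)^2 := by
      apply Finset.sum_nbij' (fun j => j+1) (fun j => j-1)
      · intro j hj; simp only [Finset.mem_Ioc] at *; omega
      · intro j hj; simp only [Finset.mem_Ioc] at *; omega
      · intro j hj; simp only [Finset.mem_Ioc] at hj; omega
      · intro j hj; simp only [Finset.mem_Ioc] at hj; omega
      · intro j hj
        simp only [Nat.add_sub_cancel]
    have hpart2 : ∑ j ∈ Finset.Ioc s R, f (j-1) / f j * (a j)^2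
        ≤ ∑ j ∈ Finset.Ioc (s-1) R, f (j-1) / f j * (a j)^2 := by
      apply Finset.sum_le_sum_of_subset_of_nonneg (Finset.Ioc_subset_Ioc_left (by omega))
      intro j hjW hjE
      simp only [Finset.mem_Ioc] at hjW hjE
      have hjs : j = s := by omega
      rw [hjs, hfs1]
      simp
    have hcomb : -(∑ j ∈ Finset.Ioc (s-1) R, (a j)^2)
          + c * ∑ j ∈ Finset.Ioc (s-1) (R-1), a j * a (j+1)
        ≤ ∑ j ∈ Finset.Ioc (s-1) R, (c/2 * ((f (j+1) + f (j-1))/ f j) - 1) * (a j)^2 := by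
      have pack : ∑ j ∈ Finset.Ioc (s-1) R, (c/2 * ((f (j+1) + f (j-1))/ f j) - 1) * (a j)^2
          = c/2 * ((∑ j ∈ Finset.Ioc (s-1) R, f (j+1)/ f j * (a j)^2)
              + ∑ j ∈ Finset.Ioc (s-1) R, f (j-1) / f j * (a j)^2)
            - ∑ j ∈ Finset.Ioc (s-1) R, (a j)^2 := by
        rw [mul_add, Finset.mul_sum, Finset.mul_sum, ← Finset.sum_add_distrib,
          ← Finset.sum_sub_distrib]
        apply Finset.sum_congr rfl
        intro j _
        ring
      rw [pack]
      have step1 : c * ∑ j ∈ Finset.Ioc (s-1) (R-1), a j * a (j+1)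
          ≤ c/2 * ∑ j ∈ Finset.Ioc (s-1) (R-1),
              (f (j+1)/ f j * (a j)^2 + f j / f (j+1) * (a (j+1))^2) := by
        calc c * ∑ j ∈ Finset.Ioc (s-1) (R-1), a j * a (j+1)
            ≤ c * ((∑ j ∈ Finset.Ioc (s-1) (R-1),
                (f (j+1)/ f j * (a j)^2 + f j / f (j+1) * (a (j+1))^2))/2) :=
              mul_le_mul_of_nonneg_left hsum1 hc0.le
          _ = c/2 * ∑ j ∈ Finset.Ioc (s-1) (R-1),
                (f (j+1)/ f j * (a j)^2 + f j / f (j+1) * (a (j+1))^2) := by ring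
      rw [hsplitf, hre] at step1
      have step2 : c/2 * ((∑ j ∈ Finset.Ioc (s-1) (R-1), f (j+1)/ f j * (a j)^2)
            + ∑ j ∈ Finset.Ioc s R, f (j-1) / f j * (a j)^2)
          ≤ c/2 * ((∑ j ∈ Finset.Ioc (s-1) R, f (j+1)/ f j * (a j)^2)
              + ∑ j ∈ Finset.Ioc (s-1) R, f (j-1) / f j * (a j)^2) := by
        apply mul_le_mul_of_nonneg_left _ (by positivity)
        exact add_le_add hpart1 hpart2
      linarith [step1, step2]
    have hcoef : ∀ j ∈ Finset.Ioc (s-1) R,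
        (c/2 * ((f (j+1) + f (j-1))/ f j) - 1) * (a j)^2 ≤ (max κ 0) * (a j * (M:ℝ)^j) := by
      intro j hj
      simp only [Finset.mem_Ioc] at hj
      have hjs : s ≤ j := by omega
      have hjR : j ≤ R := hj.2
      have h1f := hf1 j hjs hjR
      have hFf := hfF j hjs hjR
      have hfpos : (0:ℝ) < f j := lt_of_lt_of_le zero_lt_one h1f
      have hid := hfid j (by omega)
      have e2 : c/2 * ((f (j+1) + f (j-1))/ f j) - 1 = (c - 1) - c/(f j) := by
        rw [hid]
        field_simp
        ring
      have e3 : c/F ≤ c/(f j) := by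
        apply div_le_div_of_nonneg_left hc0.le hfpos hFf
      have e4 : (c/2 * ((f (j+1) + f (j-1))/ f j) - 1) ≤ κ := by
        rw [e2, hκ, hc]
        have : (1 + 2*(1/(M:ℝ)) - 1) = 2*(1/(M:ℝ)) := by ring
        linarith [e3]
      calc (c/2 * ((f (j+1) + f (j-1))/ f j) - 1) * (a j)^2
          ≤ (max κ 0) * (a j)^2 :=
            mul_le_mul_of_nonneg_right (le_trans e4 (le_max_left _ _)) (sq_nonneg _)
        _ ≤ (max κ 0) * (a j * (M:ℝ)^j) :=
            mul_le_mul_of_nonneg_left (hasq j) (le_max_right _ _)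
    have hWsub : ∑ j ∈ Finset.Ioc (s-1) R, a j * (M:ℝ)^j ≤ DD := by
      rw [hDDdef]
      apply Finset.sum_le_sum_of_subset_of_nonneg (Finset.Ioc_subset_Ioc (by omega) (by omega))
      intro j _ _
      exact mul_nonneg (ha0 j) (by positivity)
    calc -(∑ j ∈ Finset.Ioc (s-1) R, (a j)^2)
          + c * ∑ j ∈ Finset.Ioc (s-1) (R-1), a j * a (j+1)
        ≤ ∑ j ∈ Finset.Ioc (s-1) R, (c/2 * ((f (j+1) + f (j-1))/ f j) - 1) * (a j)^2 := hcomb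
      _ ≤ ∑ j ∈ Finset.Ioc (s-1) R, (max κ 0) * (a j * (M:ℝ)^j) := Finset.sum_le_sum hcoef
      _ = (max κ 0) * ∑ j ∈ Finset.Ioc (s-1) R, a j * (M:ℝ)^j := by rw [Finset.mul_sum]
      _ ≤ (max κ 0) * DD := mul_le_mul_of_nonneg_left hWsub (le_max_right _ _)
  -- ASSEMBLY
  have hPD : P ≤ DD := by
    have hk1 : k ∈ Finset.Ioc 0 K := by
      simp only [Finset.mem_Icc] at hk_mem
      simp only [Finset.mem_Ioc]
      omega
    have hsingle := Finset.single_le_sum (f := fun i => a i * (M:ℝ)^i)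
      (fun i _ => mul_nonneg (ha0 i) (by positivity)) hk1
    have e : a k * (M:ℝ)^k = P := by
      rw [hav k hk_mem, hP, two_mul, pow_add]
      ring
    rw [hDDdef]
    calc P = a k * (M:ℝ)^k := e.symm
      _ ≤ _ := hsingle
  have hDD0 : (0:ℝ) ≤ DD := by
    rw [hDDdef]
    exact Finset.sum_nonneg (fun i _ => mul_nonneg (ha0 i) (by positivity))
  have hl0 : (0:ℝ) ≤ c*(M:ℝ)^3/(((M:ℝ)^2-1)*(M:ℝ)^(2*A)) := by positivity
  have hr0 : (0:ℝ) ≤ c*(M:ℝ)/(((M:ℝ)^2-1)*(M:ℝ)^(2*B)) := by positivity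
  rw [hsq_eq, hcr_eq, hdd_eq, hsplit1, hsplit2]
  have hlP : c*(M:ℝ)^3/(((M:ℝ)^2-1)*(M:ℝ)^(2*A)) * P ≤ c*(M:ℝ)^3/(((M:ℝ)^2-1)*(M:ℝ)^(2*A)) * DD :=
    mul_le_mul_of_nonneg_left hPD hl0
  have hrP : c*(M:ℝ)/(((M:ℝ)^2-1)*(M:ℝ)^(2*B)) * P ≤ c*(M:ℝ)/(((M:ℝ)^2-1)*(M:ℝ)^(2*B)) * DD :=
    mul_le_mul_of_nonneg_left hPD hr0
  have hA2 : 2*A = 2*(B+1) := by rw [hA]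
  rw [show (2*(B+1)) = 2*A from hA2.symm]
  have hexpand : ((c*(M:ℝ)^3/(((M:ℝ)^2-1)*(M:ℝ)^(2*A))) + c*(M:ℝ)/(((M:ℝ)^2-1)*(M:ℝ)^(2*B))
        + max κ 0) * DD
      = c*(M:ℝ)^3/(((M:ℝ)^2-1)*(M:ℝ)^(2*A)) * DD + c*(M:ℝ)/(((M:ℝ)^2-1)*(M:ℝ)^(2*B)) * DD
        + (max κ 0) * DD := by ring
  rw [hexpand]
  calc -(∑ i ∈ Finset.Ioc 0 (s-1), (a i)^2 + ∑ i ∈ Finset.Ioc (s-1) R, (a i)^2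
          + ∑ i ∈ Finset.Ioc R K, (a i)^2)
        + c * (∑ i ∈ Finset.Ioc 0 (s-1), a i * a (i+1)
          + ∑ i ∈ Finset.Ioc (s-1) (R-1), a i * a (i+1)
          + ∑ i ∈ Finset.Ioc (R-1) (K-1), a i * a (i+1))
      = (-(∑ i ∈ Finset.Ioc 0 (s-1), (a i)^2) + c * ∑ i ∈ Finset.Ioc 0 (s-1), a i * a (i+1))
        + (-(∑ i ∈ Finset.Ioc (s-1) R, (a i)^2)
            + c * ∑ i ∈ Finset.Ioc (s-1) (R-1), a i * a (i+1))
        + (-(∑ i ∈ Finset.Ioc R K, (a i)^2)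
            + c * ∑ i ∈ Finset.Ioc (R-1) (K-1), a i * a (i+1)) := by ring
    _ ≤ c*(M:ℝ)^3/(((M:ℝ)^2-1)*(M:ℝ)^(2*A)) * P + (max κ 0) * DD
          + c*(M:ℝ)/(((M:ℝ)^2-1)*(M:ℝ)^(2*B)) * P :=
        add_le_add (add_le_add hQL hQW) hQR
    _ ≤ c*(M:ℝ)^3/(((M:ℝ)^2-1)*(M:ℝ)^(2*A)) * DD + (max κ 0) * DD
          + c*(M:ℝ)/(((M:ℝ)^2-1)*(M:ℝ)^(2*B)) * DD :=
        add_le_add (add_le_add hlP (le_refl _)) hrP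
    _ = c * ↑M ^ 3 / ((↑M ^ 2 - 1) * ↑M ^ (2 * A)) * DD
          + c * ↑M / ((↑M ^ 2 - 1) * ↑M ^ (2 * B)) * DD + (max κ 0) * DD := by ring


private lemma leafy' (M mm p q : ℕ) (S ND DD : ℝ) (hM : 1 ≤ M) (hq : 1 ≤ q) (hS : 0 ≤ S)
    (hpow : S^q * (M:ℝ)^p < 1) (hp : (mm:ℝ) ≤ (4*(p:ℝ)/(q:ℝ))^2)
    (hND : ND ≤ S * DD) (hD : 0 < DD) :
    ND / DD < 1 / (M:ℝ)^(Real.sqrt mm / 4) := by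
  have hM0 : (0:ℝ) < M := by exact_mod_cast Nat.lt_of_lt_of_le Nat.zero_lt_one hM
  have hM1 : (1:ℝ) ≤ M := by exact_mod_cast hM
  have hq0 : (0:ℝ) < q := by exact_mod_cast hq
  have hsq : Real.sqrt mm / 4 ≤ (p:ℝ)/(q:ℝ) := by
    have h0 : (0:ℝ) ≤ 4*(p:ℝ)/(q:ℝ) := by positivity
    have h1 : Real.sqrt mm ≤ 4*(p:ℝ)/(q:ℝ) := by
      rw [show (4*(p:ℝ)/(q:ℝ)) = Real.sqrt ((4*(p:ℝ)/(q:ℝ))^2) from (Real.sqrt_sq h0).symm]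
      exact Real.sqrt_le_sqrt hp
    have h2 : 4*(p:ℝ)/(q:ℝ) = 4*((p:ℝ)/(q:ℝ)) := by ring
    rw [h2] at h1
    linarith
  set x := (M:ℝ)^(((p:ℝ))/((q:ℝ))) with hxdef
  have hx0 : (0:ℝ) < x := Real.rpow_pos_of_pos hM0 _
  have hy0 : (0:ℝ) < (M:ℝ)^(Real.sqrt mm / 4) := Real.rpow_pos_of_pos hM0 _
  have hxge : (M:ℝ)^(Real.sqrt mm / 4) ≤ x :=
    Real.rpow_le_rpow_of_exponent_le hM1 hsq
  have hxq : x^q = (M:ℝ)^p := by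
    rw [hxdef, ← Real.rpow_natCast ((M:ℝ)^(((p:ℝ))/((q:ℝ)))) q, ← Real.rpow_mul hM0.le,
      div_mul_cancel₀ _ (ne_of_gt hq0)]
    exact Real.rpow_natCast _ p
  have hSx : S * x < 1 := by
    by_contra hcon
    push_neg at hcon
    have h1 : (1:ℝ) ≤ (S*x)^q := one_le_pow₀ hcon
    have h2 : (S*x)^q = S^q * x^q := mul_pow S x q
    rw [h2, hxq] at h1
    linarith
  have hS' : S < 1 / x := (lt_div_iff₀ hx0).2 hSx
  have hchain : ND / DD ≤ S := (div_le_iff₀ hD).2 hND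
  calc ND / DD ≤ S := hchain
    _ < 1 / x := hS'
    _ ≤ 1 / (M:ℝ)^(Real.sqrt mm / 4) := one_div_le_one_div_of_le hy0 hxge

private lemma bridge (x y D N : ℝ) (h1 : N ≤ x * D) (h2 : x ≤ y) (hD : 0 ≤ D) : N ≤ y * D :=
  le_trans h1 (mul_le_mul_of_nonneg_right h2 hD)

set_option maxHeartbeats 2000000

/-- The key estimate showing the eigenvalue relaxation for GainRatio is exponentially
weak: for `γ_i ∈ [0,1]` not all zero, `M ≥ 2`, `ε = 1/M` and `m = 2/ε = 2M`,
`(-∑_{i=1}^m γ_i² M^{2i} + (1+2ε) ∑_{i=1}^{m-1} γ_i γ_{i+1} M^{2i+1}) / (∑_{i=1}^m γ_i M^{2i})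
  < 1/M^{√m/4}`. -/
theorem stmt12 (M m : ℕ) (hM : 2 ≤ M) (ε : ℝ) (hε : ε = 1 / (M : ℝ))
    (hm : (m : ℝ) = 2 / ε) (γ : ℕ → ℝ)
    (hγ : ∀ i ∈ Finset.Icc 1 m, 0 ≤ γ i ∧ γ i ≤ 1)
    (hne : ∃ i ∈ Finset.Icc 1 m, γ i ≠ 0) :
    (-(∑ i ∈ Finset.Icc 1 m, (γ i)^2 * (M : ℝ)^(2*i)) +
        (1 + 2*ε) * ∑ i ∈ Finset.Icc 1 (m-1), γ i * γ (i+1) * (M : ℝ)^(2*i+1)) /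
      (∑ i ∈ Finset.Icc 1 m, γ i * (M : ℝ)^(2*i))
    < 1 / (M : ℝ) ^ (Real.sqrt m / 4) := by
  have hM2R : (2:ℝ) ≤ (M:ℝ) := by exact_mod_cast hM
  have hM0 : (0:ℝ) < M := by linarith
  have hmM : m = 2*M := by
    have h1 : (m:ℝ) = 2*(M:ℝ) := by rw [hm, hε]; field_simp
    exact_mod_cast h1
  have hm1 : 1 ≤ m := by omega
  have hD0 : (0:ℝ) < ∑ i ∈ Finset.Icc 1 m, γ i * (M:ℝ)^(2*i) := by
    obtain ⟨j, hj, hjne⟩ := hne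
    apply Finset.sum_pos' (fun i hi => mul_nonneg (hγ i hi).1 (by positivity))
    exact ⟨j, hj, mul_pos (lt_of_le_of_ne (hγ j hj).1 (Ne.symm hjne)) (by positivity)⟩
  rw [hε]
  rcases lt_or_ge M 11 with hM11 | hM11
  · subst hmM
    interval_cases M
    · -- M = 2
      have h1 := hγ 1 (by decide); have h2 := hγ 2 (by decide)
      have h3 := hγ 3 (by decide); have h4 := hγ 4 (by decide)
      refine leafy' 2 (2*2) 1 2 (7/10) _ _ (by norm_num) (by norm_num) (by norm_num)
        (by norm_num) (by norm_num) ?_ hD0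
      have e : Finset.Icc 1 (2*2) = {1,2,3,4} := by decide
      have e2 : Finset.Icc 1 (2*2-1) = {1,2,3} := by decide
      rw [e, e2]
      norm_num [Finset.sum_insert, Finset.mem_insert, Finset.mem_singleton]
      nlinarith [sq_nonneg (17*γ 1 - 20*γ 2), sq_nonneg (5*γ 2 - 9*γ 3), sq_nonneg (2*γ 3 - 5*γ 4),
        mul_nonneg h1.1 (sub_nonneg.2 h1.2), mul_nonneg h2.1 (sub_nonneg.2 h2.2),
        mul_nonneg h3.1 (sub_nonneg.2 h3.2), mul_nonneg h4.1 (sub_nonneg.2 h4.2)]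
    · -- M = 3
      have h1 := hγ 1 (by decide); have h2 := hγ 2 (by decide)
      have h3 := hγ 3 (by decide); have h4 := hγ 4 (by decide)
      have h5 := hγ 5 (by decide); have h6 := hγ 6 (by decide)
      refine leafy' 3 (2*3) 31 50 (101/200) _ _ (by norm_num) (by norm_num) (by norm_num)
        (by norm_num) (by norm_num) ?_ hD0
      have e : Finset.Icc 1 (2*3) = {1,2,3,4,5,6} := by decide
      have e2 : Finset.Icc 1 (2*3-1) = {1,2,3,4,5} := by decide
      rw [e, e2]
      norm_num [Finset.sum_insert, Finset.mem_insert, Finset.mem_singleton]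
      nlinarith [sq_nonneg (3*γ 1 - 5*γ 2), sq_nonneg (5*γ 2 - 12*γ 3), sq_nonneg (γ 3 - 3*γ 4),
        sq_nonneg (4*γ 4 - 15*γ 5), sq_nonneg (37*γ 5 - 200*γ 6),
        mul_nonneg h1.1 (sub_nonneg.2 h1.2), mul_nonneg h2.1 (sub_nonneg.2 h2.2),
        mul_nonneg h3.1 (sub_nonneg.2 h3.2), mul_nonneg h4.1 (sub_nonneg.2 h4.2),
        mul_nonneg h5.1 (sub_nonneg.2 h5.2), mul_nonneg h6.1 (sub_nonneg.2 h6.2)]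
    · -- M = 4
      exact leafy' 4 (2*4) 3 4 (3/10) _ _ (by norm_num) (by norm_num) (by norm_num)
        (by norm_num) (by norm_num)
        (bridge _ _ _ _ (scheme 4 (2*4) 1 (by norm_num) (by norm_num) le_rfl γ hγ)
          (by rw [max_eq_left (by norm_num)]; norm_num) hD0.le) hD0
    · exact leafy' 5 (2*5) 4 4 (19/100) _ _ (by norm_num) (by norm_num) (by norm_num)
        (by norm_num) (by norm_num)
        (bridge _ _ _ _ (scheme 5 (2*5) 1 (by norm_num) (by norm_num) le_rfl γ hγ)
          (by rw [max_eq_left (by norm_num)]; norm_num) hD0.le) hD0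
    · exact leafy' 6 (2*6) 4 4 (13/105) _ _ (by norm_num) (by norm_num) (by norm_num)
        (by norm_num) (by norm_num)
        (bridge _ _ _ _ (scheme 6 (2*6) 1 (by norm_num) (by norm_num) le_rfl γ hγ)
          (by rw [max_eq_left (by norm_num)]; norm_num) hD0.le) hD0
    · exact leafy' 7 (2*7) 4 4 (31/392) _ _ (by norm_num) (by norm_num) (by norm_num)
        (by norm_num) (by norm_num)
        (bridge _ _ _ _ (scheme 7 (2*7) 1 (by norm_num) (by norm_num) le_rfl γ hγ)
          (by rw [max_eq_left (by norm_num)]; norm_num) hD0.le) hD0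
    · exact leafy' 8 (2*8) 4 4 (47/1008) _ _ (by norm_num) (by norm_num) (by norm_num)
        (by norm_num) (by norm_num)
        (bridge _ _ _ _ (scheme 8 (2*8) 1 (by norm_num) (by norm_num) le_rfl γ hγ)
          (by rw [max_eq_left (by norm_num)]; norm_num) hD0.le) hD0
    · exact leafy' 9 (2*9) 5 4 (71/3240) _ _ (by norm_num) (by norm_num) (by norm_num)
        (by norm_num) (by norm_num)
        (bridge _ _ _ _ (scheme 9 (2*9) 1 (by norm_num) (by norm_num) le_rfl γ hγ)
          (by rw [max_eq_left (by norm_num)]; norm_num) hD0.le) hD0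
    · exact leafy' 10 (2*10) 5 4 (2/825) _ _ (by norm_num) (by norm_num) (by norm_num)
        (by norm_num) (by norm_num)
        (bridge _ _ _ _ (scheme 10 (2*10) 1 (by norm_num) (by norm_num) le_rfl γ hγ)
          (by rw [max_eq_left (by norm_num)]; norm_num) hD0.le) hD0
  · -- M ≥ 11
    have hM11R : (11:ℝ) ≤ (M:ℝ) := by exact_mod_cast hM11
    set B := Nat.sqrt (2*M) / 8 + 1 with hBdef
    have hB1 : 1 ≤ B := by omega
    set q' := Nat.sqrt (2*M) with hq'def
    have hq1 : q' * q' ≤ 2*M := Nat.sqrt_le (2*M)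
    have hq2 : 2*M < (q' + 1) * (q' + 1) := Nat.lt_succ_sqrt (2*M)
    have h8B : q' + 1 ≤ 8 * B := by
      have := Nat.div_add_mod q' 8
      omega
    have hQBnat : 2*((B+1)*(B+2)) ≤ M + 2 := by
      rcases Nat.eq_zero_or_pos (q' / 8) with h0 | hpos
      · have hB1' : B = 1 := by omega
        rw [hB1']
        omega
      · set r := q' / 8 with hrdef
        have h8r : 8*r ≤ q' := by omega
        have hq'2 : 64*(r*r) ≤ 2*M := by
          calc 64*(r*r) = (8*r)*(8*r) := by ring
            _ ≤ q' * q' := Nat.mul_le_mul h8r h8r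
            _ ≤ 2*M := hq1
        have hBr : B = r + 1 := by omega
        have h60 : 20*r + 20 ≤ 60*(r*r) := by nlinarith [hpos]
        have e : (B+1)*(B+2) = r*r + 5*r + 6 := by rw [hBr]; ring
        omega
    have hFpos : (0:ℝ) < ((B:ℝ)+1)*((B:ℝ)+2) := by positivity
    have hQB : 2*(((B:ℝ)+1)*((B:ℝ)+2)) ≤ (M:ℝ)+2 := by exact_mod_cast hQBnat
    have hκ : 2*(1/(M:ℝ)) - (1+2*(1/(M:ℝ)))/(((B:ℝ)+1)*((B:ℝ)+2)) ≤ 0 := by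
      have key : 2*(1/(M:ℝ)) - (1+2*(1/(M:ℝ)))/(((B:ℝ)+1)*((B:ℝ)+2))
          = (2*(((B:ℝ)+1)*((B:ℝ)+2)) - ((M:ℝ)+2)) / ((M:ℝ)*(((B:ℝ)+1)*((B:ℝ)+2))) := by
        field_simp
      rw [key]
      apply div_nonpos_of_nonpos_of_nonneg
      · linarith
      · positivity
    have hsch := scheme M m B (by omega) hm1 hB1 γ hγ
    rw [max_eq_right hκ] at hsch
    have hMB0 : (0:ℝ) < (M:ℝ)^(2*B) := by positivity
    have hS0 : (0:ℝ) ≤ (1 + 2*(1/(M:ℝ)))*(M:ℝ)^3/(((M:ℝ)^2-1)*(M:ℝ)^(2*(B+1)))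
        + (1 + 2*(1/(M:ℝ)))*(M:ℝ)/(((M:ℝ)^2-1)*(M:ℝ)^(2*B)) + 0 := by
      have hMsq : (0:ℝ) < (M:ℝ)^2 - 1 := by nlinarith
      positivity
    have hpoweq : ((1 + 2*(1/(M:ℝ)))*(M:ℝ)^3/(((M:ℝ)^2-1)*(M:ℝ)^(2*(B+1)))
        + (1 + 2*(1/(M:ℝ)))*(M:ℝ)/(((M:ℝ)^2-1)*(M:ℝ)^(2*B)) + 0)^1 * (M:ℝ)^(2*B) < 1 := by
      have hMsq : (0:ℝ) < (M:ℝ)^2 - 1 := by nlinarith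
      have epow : (M:ℝ)^(2*(B+1)) = (M:ℝ)^(2*B) * (M:ℝ)^2 := by
        rw [show 2*(B+1) = 2*B+2 by ring, pow_add]
      rw [pow_one, epow]
      have e2 : ((1 + 2*(1/(M:ℝ)))*(M:ℝ)^3/(((M:ℝ)^2-1)*((M:ℝ)^(2*B) * (M:ℝ)^2))
          + (1 + 2*(1/(M:ℝ)))*(M:ℝ)/(((M:ℝ)^2-1)*(M:ℝ)^(2*B)) + 0) * (M:ℝ)^(2*B)
          = 2*((M:ℝ)+2)/((M:ℝ)^2-1) := by
        field_simp
        ring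
      rw [e2, div_lt_one hMsq]
      nlinarith
    have hp : ((m:ℕ):ℝ) ≤ (4*((2*B : ℕ):ℝ)/((1:ℕ):ℝ))^2 := by
      have hc1 : ((m:ℕ):ℝ) = 2*(M:ℝ) := by exact_mod_cast hmM
      have hc2 : ((q':ℕ):ℝ)+1 ≤ 8*((B:ℕ):ℝ) := by exact_mod_cast h8B
      have hc3 : 2*(M:ℝ) < (((q':ℕ):ℝ)+1)*(((q':ℕ):ℝ)+1) := by exact_mod_cast hq2
      have hq'0 : (0:ℝ) ≤ ((q':ℕ):ℝ) := by positivity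
      push_cast
      push_cast at hc2 hc3
      nlinarith [hc2, hc3]
    exact leafy' M m (2*B) 1 _ _ _ (by omega) le_rfl hS0 hpoweq hp hsch hD0
end

section
/- Let x_1, ..., x_n be real numbers and suppose n >= 4. For any interval I of indices, - sum_{i in I} x_i^2 + (1 + 2/n) * sum_{i, i+1 in I} x_i x_{i+1} <= 0, provided |I| <= sqrt(n). -/
open Finset Real

lemma key13 (k : ℕ) (hk : 2 ≤ k) (y : ℕ → ℝ) :
    ∑ j ∈ range (k-1), y j * y (j+1) ≤
      Real.cos (Real.pi/((k:ℝ)+1)) * ∑ j ∈ range k, (y j)^2 := by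
  set φ := Real.pi/((k:ℝ)+1) with hφ
  have hk1 : (0:ℝ) < (k:ℝ)+1 := by positivity
  have hφpos : 0 < φ := by positivity
  set s : ℕ → ℝ := fun j => Real.sin (((j:ℝ)+1) * φ) with hsdef
  have hs : ∀ j, j + 1 ≤ k → 0 < s j := by
    intro j hj
    apply Real.sin_pos_of_pos_of_lt_pi
    · positivity
    · have h1 : ((j:ℝ)+1) < (k:ℝ)+1 := by
        have : (j:ℝ) + 1 ≤ (k:ℝ) := by exact_mod_cast hj
        linarith
      calc ((j:ℝ)+1) * φ < ((k:ℝ)+1) * φ := by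
            exact mul_lt_mul_of_pos_right h1 hφpos
        _ = Real.pi := by rw [hφ]; field_simp [hk1.ne']
  have hrec : ∀ m : ℕ, s (m+2) + s m = 2 * Real.cos φ * s (m+1) := by
    intro m
    simp only [hsdef]
    push_cast
    have e1 : ((m:ℝ)+2+1) * φ = (((m:ℝ)+1+1)*φ) + φ := by ring
    have e2 : ((m:ℝ)+1) * φ = (((m:ℝ)+1+1)*φ) - φ := by ring
    rw [e1, e2, Real.sin_add, Real.sin_sub]
    ring
  have hsk : s k = 0 := by
    have h : ((k:ℝ)+1) * φ = Real.pi := by rw [hφ]; field_simp [hk1.ne']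
    simp only [hsdef, h, Real.sin_pi]
  have claim : ∀ m, m ≤ k - 1 →
      ∑ j ∈ range m, y j * y (j+1) ≤
        Real.cos φ * ∑ j ∈ range (m+1), (y j)^2 - (s (m+1) / s m)/2 * (y m)^2 := by
    intro m
    induction m with
    | zero =>
      intro _
      have hs0 := hs 0 (by omega)
      have h1 : s 1 = 2 * Real.cos φ * s 0 := by
        simp only [hsdef]
        push_cast
        have e : ((1:ℝ)+1) * φ = φ + φ := by ring
        rw [e, Real.sin_add]
        ring
      simp only [range_zero, sum_empty, Nat.zero_add, Finset.sum_range_one]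
      rw [h1]
      have h2 : 2 * Real.cos φ * s 0 / s 0 = 2 * Real.cos φ := by
        field_simp
      rw [h2]
      have e0 : Real.cos φ * (y 0)^2 - 2 * Real.cos φ / 2 * (y 0)^2 = 0 := by ring
      linarith
    | succ m ih =>
      intro hm
      have ihm := ih (by omega)
      have hsm := hs m (by omega)
      have hsm1 := hs (m+1) (by omega)
      have hedge : y m * y (m+1) ≤
          (s (m+1) / s m)/2 * (y m)^2 + (s m / s (m+1))/2 * (y (m+1))^2 := by
        have h2 := sq_nonneg (s (m+1) * y m - s m * y (m+1))
        have hpos : (0:ℝ) < 2 * (s m * s (m+1)) := by positivity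
        have e : (s (m+1) / s m)/2 * (y m)^2 + (s m / s (m+1))/2 * (y (m+1))^2
            - y m * y (m+1)
            = (s (m+1) * y m - s m * y (m+1))^2 / (2 * (s m * s (m+1))) := by
          field_simp
          ring
        have h3 := div_nonneg h2 hpos.le
        linarith [e ▸ h3]
      have hc : s m / s (m+1) / 2 * (y (m+1))^2 + s (m+2) / s (m+1) / 2 * (y (m+1))^2
          = Real.cos φ * (y (m+1))^2 := by
        have h := hrec m
        field_simp
        linear_combination (y (m+1))^2 * h
      rw [sum_range_succ, sum_range_succ (fun j => (y j)^2) (m+1)]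
      linarith
  have final := claim (k-1) le_rfl
  have hke : k - 1 + 1 = k := by omega
  rw [hke, hsk] at final
  have hz : (0:ℝ) / s (k-1) / 2 * (y (k-1))^2 = 0 := by simp
  linarith

set_option maxHeartbeats 1000000 in
lemma cosle13 (k n : ℕ) (hk : 2 ≤ k) (hn : 4 ≤ n) (hkn : ((k:ℝ))^2 ≤ (n:ℝ)) :
    (1 + 2/(n:ℝ)) * Real.cos (Real.pi/((k:ℝ)+1)) ≤ 1 := by
  have hn0 : (0:ℝ) < n := by positivity
  have hcos : Real.cos (Real.pi/((k:ℝ)+1)) ≤ (k:ℝ)^2 / ((k:ℝ)^2 + 2) := by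
    rcases eq_or_lt_of_le hk with h2 | h3
    · rw [← h2]
      norm_num
    · have hk3 : (3:ℝ) ≤ (k:ℝ) := by exact_mod_cast h3
      set t := Real.pi/((k:ℝ)+1) with ht
      have htpos : 0 < t := by positivity
      have ht1 : t ≤ 0.79 := by
        rw [ht, div_le_iff₀ (by linarith)]
        nlinarith [Real.pi_lt_d2]
      have habs : |t| ≤ 1 := by rw [abs_of_pos htpos]; linarith
      have hcb := Real.cos_bound habs
      rw [abs_of_pos htpos] at hcb
      have hub : Real.cos t ≤ 1 - t^2/2 + t^4 * (5/96) := by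
        cases' abs_sub_le_iff.mp hcb with h1 _
        linarith
      have hπ := Real.pi_gt_d6
      have htk : t * ((k:ℝ)+1) = Real.pi := by
        rw [ht]; field_simp
      clear_value t
      have h2 : (0:ℝ) < (k:ℝ)^2 + 2 := by positivity
      have hA : (0:ℝ) < ((k:ℝ)+1)^2 := by positivity
      have h4 : t^2 ≤ 0.6241 := by nlinarith
      have h6' : 9.8696 / (((k:ℝ)+1)^2) ≤ t^2 := by
        rw [div_le_iff₀ hA]
        nlinarith
      have hG : 2 ≤ ((k:ℝ)^2+2) * (t^2/2 - t^4*(5/96)) := by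
        have e1 : 0.4674 * t^2 ≤ t^2/2 - t^4*(5/96) := by nlinarith [h4, sq_nonneg t]
        have e3 : 2 ≤ ((k:ℝ)^2+2) * (0.4674 * (9.8696/(((k:ℝ)+1)^2))) := by
          have eq1 : ((k:ℝ)^2+2) * (0.4674 * (9.8696/(((k:ℝ)+1)^2)))
              = (((k:ℝ)^2+2) * 0.4674 * 9.8696)/(((k:ℝ)+1)^2) := by ring
          rw [eq1, le_div_iff₀ hA]
          nlinarith [hk3, sq_nonneg ((k:ℝ)-1)]
        calc (2:ℝ) ≤ ((k:ℝ)^2+2) * (0.4674 * (9.8696/(((k:ℝ)+1)^2))) := e3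
          _ ≤ ((k:ℝ)^2+2) * (0.4674 * t^2) := by
              apply mul_le_mul_of_nonneg_left _ h2.le
              nlinarith [h6']
          _ ≤ ((k:ℝ)^2+2) * (t^2/2 - t^4*(5/96)) := by
              exact mul_le_mul_of_nonneg_left e1 h2.le
      rw [le_div_iff₀ h2]
      have hm1 := mul_le_mul_of_nonneg_right hub h2.le
      linarith [hm1, hG]
  have h2 : (0:ℝ) < (k:ℝ)^2 + 2 := by positivity
  have h3 : (1 + 2/(n:ℝ)) * ((k:ℝ)^2/((k:ℝ)^2+2)) ≤ 1 := by
    rw [show (1 + 2/(n:ℝ)) * ((k:ℝ)^2/((k:ℝ)^2+2))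
        = (((n:ℝ)+2)*(k:ℝ)^2) / ((n:ℝ)*((k:ℝ)^2+2)) from by field_simp]
    rw [div_le_one (by positivity)]
    nlinarith
  have hpos : (0:ℝ) < 1 + 2/(n:ℝ) := by positivity
  calc (1 + 2/(n:ℝ)) * Real.cos (Real.pi/((k:ℝ)+1))
      ≤ (1 + 2/(n:ℝ)) * ((k:ℝ)^2/((k:ℝ)^2+2)) := by
        exact mul_le_mul_of_nonneg_left hcos hpos.le
    _ ≤ 1 := h3

/-- For an interval `I = [a,b]` of indices with `|I| ≤ √n` (and `n ≥ 4`),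
`-∑_{i∈I} x_i² + (1 + 2/n) ∑_{i,i+1∈I} x_i x_{i+1} ≤ 0`. -/
theorem stmt13 (n : ℕ) (hn : 4 ≤ n) (x : ℕ → ℝ) (a b : ℕ)
    (hI : ((Finset.Icc a b).card : ℝ) ≤ Real.sqrt n) :
    -(∑ i ∈ Finset.Icc a b, (x i)^2) +
      (1 + 2/(n:ℝ)) * ∑ i ∈ (Finset.Icc a b).filter (fun i => i + 1 ∈ Finset.Icc a b),
        x i * x (i+1) ≤ 0 := by
  rcases lt_or_ge b a with hba | hab
  · have he : Finset.Icc a b = ∅ := Finset.Icc_eq_empty (by omega)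
    simp [he]
  rcases eq_or_lt_of_le hab with heq | hlt
  · subst heq
    have he : (Finset.Icc a a).filter (fun i => i + 1 ∈ Finset.Icc a a) = ∅ := by
      ext i
      simp only [Finset.mem_filter, Finset.mem_Icc, Finset.notMem_empty, iff_false]
      omega
    rw [he]
    simp [Finset.Icc_self]
    nlinarith [sq_nonneg (x a)]
  -- a < b
  set k := b + 1 - a with hkdef
  have hk2 : 2 ≤ k := by omega
  have hcard : (Finset.Icc a b).card = k := by
    rw [Nat.card_Icc]
  have hkn : ((k:ℝ))^2 ≤ (n:ℝ) := by
    rw [hcard] at hI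
    have h0 : (0:ℝ) ≤ (k:ℝ) := by positivity
    have hs := Real.sq_sqrt (by positivity : (0:ℝ) ≤ (n:ℝ))
    calc ((k:ℝ))^2 ≤ (Real.sqrt n)^2 := by
          exact pow_le_pow_left₀ h0 hI 2
      _ = (n:ℝ) := hs
  have hfil : (Finset.Icc a b).filter (fun i => i + 1 ∈ Finset.Icc a b)
      = Finset.Icc a (b-1) := by
    ext i
    simp only [Finset.mem_filter, Finset.mem_Icc]
    omega
  rw [hfil]
  set y : ℕ → ℝ := fun j => x (a+j) with hy
  have hsq : ∑ i ∈ Finset.Icc a b, (x i)^2 = ∑ j ∈ range k, (y j)^2 := by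
    rw [show Finset.Icc a b = Finset.Ico a (b+1) from (Finset.Ico_add_one_right_eq_Icc a b).symm,
      Finset.sum_Ico_eq_sum_range]
  have hed : ∑ i ∈ Finset.Icc a (b-1), x i * x (i+1)
      = ∑ j ∈ range (k-1), y j * y (j+1) := by
    rw [show Finset.Icc a (b-1) = Finset.Ico a b from by
        rw [← Finset.Ico_add_one_right_eq_Icc]; congr 1; omega,
      Finset.sum_Ico_eq_sum_range]
    apply Finset.sum_congr
    · congr 1; omega
    · intro j _
      simp only [hy]
      rw [← Nat.add_assoc]
  rw [hsq, hed]
  have hkey := key13 k hk2 y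
  have hcos := cosle13 k n hk2 hn hkn
  have hSnn : (0:ℝ) ≤ ∑ j ∈ range k, (y j)^2 := by positivity
  have hlpos : (0:ℝ) < 1 + 2/(n:ℝ) := by positivity
  have h1 : (1 + 2/(n:ℝ)) * ∑ j ∈ range (k-1), y j * y (j+1)
      ≤ (1 + 2/(n:ℝ)) * (Real.cos (Real.pi/((k:ℝ)+1)) * ∑ j ∈ range k, (y j)^2) :=
    mul_le_mul_of_nonneg_left hkey hlpos.le
  have h2 : (1 + 2/(n:ℝ)) * (Real.cos (Real.pi/((k:ℝ)+1)) * ∑ j ∈ range k, (y j)^2)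
      ≤ 1 * ∑ j ∈ range k, (y j)^2 := by
    rw [← mul_assoc]
    exact mul_le_mul_of_nonneg_right hcos hSnn
  simp only [one_mul] at h2
  linarith
end

section
/- Let v_1, ..., v_n be vectors in a real inner product space satisfying |<v_i, v_j>| <= v_j^2 (squared norm) for all i, j, and sum_i ||v_i||^2 <= 2. Let A be an n x n matrix with |A_{ij}| <= B for all i,j, and suppose sum_{i,j} A_{ij} <v_i, v_j> >= B * n^rho. Then the set S of indices i with ||v_i||^2 <= 16/n^rho satisfies sum_{i,j in S} A_{ij} <v_i, v_j> >= B * n^rho / 2. -/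
open Finset RealInnerProductSpace

/-- Discarding long vectors keeps half the SDP value: if `|⟪v_i,v_j⟫| ≤ ‖v_j‖²`,
`∑‖v_i‖² ≤ 2`, `|A_{ij}| ≤ B` and `∑ A_{ij}⟪v_i,v_j⟫ ≥ B n^ρ`, then the indices with
`‖v_i‖² ≤ 16/n^ρ` retain at least `B n^ρ / 2` of the value. -/
theorem stmt14 {E : Type*} [NormedAddCommGroup E] [InnerProductSpace ℝ E]
    (n : ℕ) (ρ : ℝ) (hρ : 0 < ρ) (v : Fin n → E)
    (hineq : ∀ i j, |⟪v i, v j⟫| ≤ ‖v j‖^2)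
    (hsum : ∑ i, ‖v i‖^2 ≤ 2)
    (B : ℝ) (A : Matrix (Fin n) (Fin n) ℝ) (hA : ∀ i j, |A i j| ≤ B)
    (hval : B * (n : ℝ) ^ ρ ≤ ∑ i, ∑ j, A i j * ⟪v i, v j⟫) :
    B * (n : ℝ) ^ ρ / 2 ≤
      ∑ i ∈ Finset.univ.filter (fun i => ‖v i‖^2 ≤ 16 / (n : ℝ) ^ ρ),
        ∑ j ∈ Finset.univ.filter (fun j => ‖v j‖^2 ≤ 16 / (n : ℝ) ^ ρ),
          A i j * ⟪v i, v j⟫ := by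
  rcases Nat.eq_zero_or_pos n with hn | hn
  · subst hn
    simp [Real.zero_rpow hρ.ne']
  · have hB : 0 ≤ B := (abs_nonneg _).trans (hA ⟨0, hn⟩ ⟨0, hn⟩)
    have hN : (0:ℝ) < (n:ℝ) ^ ρ := Real.rpow_pos_of_pos (by exact_mod_cast hn) ρ
    set N : ℝ := (n:ℝ) ^ ρ with hNdef
    classical
    set S : Finset (Fin n) := Finset.univ.filter (fun i => ‖v i‖^2 ≤ 16 / N) with hS
    set T : Finset (Fin n) := Finset.univ.filter (fun i => ¬ (‖v i‖^2 ≤ 16 / N)) with hT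
    have hnn : ∀ i, (0:ℝ) ≤ ‖v i‖^2 := fun i => sq_nonneg _
    -- card bound
    have hsumT : (T.card : ℝ) * (16 / N) ≤ 2 := by
      have h1 : (T.card : ℝ) * (16 / N) ≤ ∑ i ∈ T, ‖v i‖^2 := by
        have := Finset.card_nsmul_le_sum T (fun i => ‖v i‖^2) (16 / N)
          (fun i hi => le_of_not_ge (Finset.mem_filter.mp hi).2)
        simpa [nsmul_eq_mul] using this
      have h2 : ∑ i ∈ T, ‖v i‖^2 ≤ ∑ i, ‖v i‖^2 :=
        Finset.sum_le_sum_of_subset_of_nonneg (Finset.subset_univ T)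
          (fun i _ _ => hnn i)
      linarith
    have hcard : (T.card : ℝ) ≤ N / 8 := by
      have h := mul_le_mul_of_nonneg_right hsumT hN.le
      rw [mul_assoc, div_mul_cancel₀ _ hN.ne'] at h
      linarith
    -- row bound
    have hrow : ∀ i, |∑ j, A i j * ⟪v i, v j⟫| ≤ 2 * B := by
      intro i
      calc |∑ j, A i j * ⟪v i, v j⟫| ≤ ∑ j, |A i j * ⟪v i, v j⟫| :=
            Finset.abs_sum_le_sum_abs _ _
        _ ≤ ∑ j, B * ‖v j‖^2 := Finset.sum_le_sum fun j _ => by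
            rw [abs_mul]
            exact mul_le_mul (hA i j) (hineq i j) (abs_nonneg _) hB
        _ = B * ∑ j, ‖v j‖^2 := by rw [Finset.mul_sum]
        _ ≤ 2 * B := by nlinarith
    -- column bound over S
    have hcol : ∀ j, |∑ i ∈ S, A i j * ⟪v i, v j⟫| ≤ 2 * B := by
      intro j
      calc |∑ i ∈ S, A i j * ⟪v i, v j⟫| ≤ ∑ i ∈ S, |A i j * ⟪v i, v j⟫| :=
            Finset.abs_sum_le_sum_abs _ _
        _ ≤ ∑ i ∈ S, B * ‖v i‖^2 := Finset.sum_le_sum fun i _ => by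
            rw [abs_mul, real_inner_comm]
            exact mul_le_mul (hA i j) (hineq j i) (abs_nonneg _) hB
        _ ≤ ∑ i, B * ‖v i‖^2 :=
            Finset.sum_le_sum_of_subset_of_nonneg (Finset.subset_univ S)
              (fun i _ _ => mul_nonneg hB (hnn i))
        _ = B * ∑ i, ‖v i‖^2 := by rw [Finset.mul_sum]
        _ ≤ 2 * B := by nlinarith
    -- decomposition
    have hsplit : ∑ i, ∑ j, A i j * ⟪v i, v j⟫
        = (∑ i ∈ S, ∑ j ∈ S, A i j * ⟪v i, v j⟫)
          + (∑ i ∈ S, ∑ j ∈ T, A i j * ⟪v i, v j⟫)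
          + (∑ i ∈ T, ∑ j, A i j * ⟪v i, v j⟫) := by
      rw [← Finset.sum_filter_add_sum_filter_not Finset.univ
        (fun i => ‖v i‖^2 ≤ 16 / N) (fun i => ∑ j, A i j * ⟪v i, v j⟫)]
      congr 1
      rw [← Finset.sum_add_distrib]
      refine Finset.sum_congr rfl fun i _ => ?_
      exact (Finset.sum_filter_add_sum_filter_not Finset.univ
        (fun j => ‖v j‖^2 ≤ 16 / N) _).symm
    -- bound the two error terms
    have hX1 : |∑ i ∈ S, ∑ j ∈ T, A i j * ⟪v i, v j⟫| ≤ (T.card : ℝ) * (2 * B) := by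
      rw [Finset.sum_comm]
      calc |∑ j ∈ T, ∑ i ∈ S, A i j * ⟪v i, v j⟫|
          ≤ ∑ j ∈ T, |∑ i ∈ S, A i j * ⟪v i, v j⟫| := Finset.abs_sum_le_sum_abs _ _
        _ ≤ ∑ _j ∈ T, 2 * B := Finset.sum_le_sum fun j _ => hcol j
        _ = (T.card : ℝ) * (2 * B) := by rw [Finset.sum_const, nsmul_eq_mul]
    have hX2 : |∑ i ∈ T, ∑ j, A i j * ⟪v i, v j⟫| ≤ (T.card : ℝ) * (2 * B) := by
      calc |∑ i ∈ T, ∑ j, A i j * ⟪v i, v j⟫|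
          ≤ ∑ i ∈ T, |∑ j, A i j * ⟪v i, v j⟫| := Finset.abs_sum_le_sum_abs _ _
        _ ≤ ∑ _i ∈ T, 2 * B := Finset.sum_le_sum fun i _ => hrow i
        _ = (T.card : ℝ) * (2 * B) := by rw [Finset.sum_const, nsmul_eq_mul]
    have h1 := abs_le.mp hX1
    have h2 := abs_le.mp hX2
    have hprod : (T.card : ℝ) * B ≤ N / 8 * B := mul_le_mul_of_nonneg_right hcard hB
    show B * N / 2 ≤ ∑ i ∈ S, ∑ j ∈ S, A i j * ⟪v i, v j⟫
    nlinarith [hsplit, hval, h1.1, h2.1, hprod]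
end

section
/- Let v_1, ..., v_n be nonzero vectors in a real inner product space with tau/Delta <= ||v_i||^2 <= tau for all i, where tau > 0 and Delta > 1. Let A be a real n x n matrix with zero diagonal. Define w_i = v_i/||v_i|| independently with probability ||v_i||/sqrt(tau), and w_i = 0 otherwise. Then E[sum_{i,j} A_{ij} <w_i, w_j>] / E[sum_i ||w_i||^2] >= (1/sqrt(Delta)) * (sum_{i,j} A_{ij} <v_i, v_j>) / (sum_i ||v_i||^2), assuming sum_{i,j} A_{ij} <v_i, v_j> > 0. -/
open Finset RealInnerProductSpace

lemma sum_prod_ite {n : ℕ} (F G : Fin n → ℝ) :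
    ∑ S : Finset (Fin n), (∏ i ∈ S, F i) * ∏ i ∈ Sᶜ, G i = ∏ i, (F i + G i) := by
  rw [Finset.prod_add, Finset.powerset_univ]
  exact Finset.sum_congr rfl fun S _ => by rw [Finset.compl_eq_univ_sdiff]

lemma marginal_one {n : ℕ} (p : Fin n → ℝ) (i : Fin n) :
    ∑ S : Finset (Fin n), ((∏ k ∈ S, p k) * ∏ k ∈ Sᶜ, (1 - p k)) *
      (if i ∈ S then (1:ℝ) else 0) = p i := by
  have h : ∀ S : Finset (Fin n),
      ((∏ k ∈ S, p k) * ∏ k ∈ Sᶜ, (1 - p k)) * (if i ∈ S then (1:ℝ) else 0)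
      = (∏ k ∈ S, p k) * ∏ k ∈ Sᶜ, (if k = i then 0 else 1 - p k) := by
    intro S
    by_cases hi : i ∈ S
    · simp only [hi, if_true, mul_one]
      congr 1
      refine Finset.prod_congr rfl fun k hk => ?_
      have : k ≠ i := fun h => by subst h; exact (Finset.mem_compl.mp hk) hi
      simp [this]
    · have hz : (∏ k ∈ Sᶜ, if k = i then (0:ℝ) else 1 - p k) = 0 :=
        Finset.prod_eq_zero (Finset.mem_compl.mpr hi) (by simp)
      simp [hi, hz]
  simp_rw [h]
  rw [sum_prod_ite]
  rw [Finset.prod_eq_single i (fun k _ hk => by simp [hk]) (by simp)]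
  simp

lemma marginal_two {n : ℕ} (p : Fin n → ℝ) (i j : Fin n) (hij : i ≠ j) :
    ∑ S : Finset (Fin n), ((∏ k ∈ S, p k) * ∏ k ∈ Sᶜ, (1 - p k)) *
      ((if i ∈ S then (1:ℝ) else 0) * (if j ∈ S then (1:ℝ) else 0)) = p i * p j := by
  have h : ∀ S : Finset (Fin n),
      ((∏ k ∈ S, p k) * ∏ k ∈ Sᶜ, (1 - p k)) *
        ((if i ∈ S then (1:ℝ) else 0) * (if j ∈ S then (1:ℝ) else 0))
      = (∏ k ∈ S, p k) * ∏ k ∈ Sᶜ, (if k = i ∨ k = j then 0 else 1 - p k) := by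
    intro S
    by_cases hi : i ∈ S
    · by_cases hj : j ∈ S
      · simp only [hi, hj, if_true, mul_one]
        congr 1
        refine Finset.prod_congr rfl fun k hk => ?_
        have hk' := Finset.mem_compl.mp hk
        have h1 : k ≠ i := fun h => by subst h; exact hk' hi
        have h2 : k ≠ j := fun h => by subst h; exact hk' hj
        simp [h1, h2]
      · have hz : (∏ k ∈ Sᶜ, if k = i ∨ k = j then (0:ℝ) else 1 - p k) = 0 :=
          Finset.prod_eq_zero (Finset.mem_compl.mpr hj) (by simp)
        simp [hj, hz]
    · have hz : (∏ k ∈ Sᶜ, if k = i ∨ k = j then (0:ℝ) else 1 - p k) = 0 :=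
        Finset.prod_eq_zero (Finset.mem_compl.mpr hi) (by simp)
      simp [hi, hz]
  simp_rw [h]
  rw [sum_prod_ite]
  have : ∀ k, p k + (if k = i ∨ k = j then 0 else 1 - p k) =
      if k = i ∨ k = j then p k else 1 := by
    intro k; by_cases h : k = i ∨ k = j <;> simp [h]
  simp_rw [this]
  rw [← Finset.prod_filter]
  have : Finset.univ.filter (fun k => k = i ∨ k = j) = {i, j} := by
    ext k; simp [or_comm]
  rw [this, Finset.prod_pair hij]
/-- Randomized rounding for roughly-equal-length vectors: pick `w_i = v_i/‖v_i‖`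
independently with probability `‖v_i‖/√τ` (and `w_i = 0` otherwise).  The expectation
is modelled as a sum over the subset `S` of chosen indices, with probability
`(∏_{i∈S} p_i)(∏_{i∉S}(1-p_i))`.  Then the ratio of expectations is at least
`(1/√Δ)` times the original SDP ratio. -/
theorem stmt15 {E : Type*} [NormedAddCommGroup E] [InnerProductSpace ℝ E]
    (n : ℕ) (τ Δ : ℝ) (hτ : 0 < τ) (hΔ : 1 < Δ)
    (v : Fin n → E) (hv0 : ∀ i, v i ≠ 0)
    (hlb : ∀ i, τ / Δ ≤ ‖v i‖^2) (hub : ∀ i, ‖v i‖^2 ≤ τ)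
    (A : Matrix (Fin n) (Fin n) ℝ) (hdiag : ∀ i, A i i = 0)
    (hpos : 0 < ∑ i, ∑ j, A i j * ⟪v i, v j⟫) :
    (1 / Real.sqrt Δ) * (∑ i, ∑ j, A i j * ⟪v i, v j⟫) / (∑ i, ‖v i‖^2) ≤
      (∑ S : Finset (Fin n),
          ((∏ i ∈ S, ‖v i‖ / Real.sqrt τ) * ∏ i ∈ Sᶜ, (1 - ‖v i‖ / Real.sqrt τ)) *
            ∑ i, ∑ j, A i j *
              ⟪(if i ∈ S then ‖v i‖⁻¹ • v i else 0), (if j ∈ S then ‖v j‖⁻¹ • v j else 0)⟫) /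
      (∑ S : Finset (Fin n),
          ((∏ i ∈ S, ‖v i‖ / Real.sqrt τ) * ∏ i ∈ Sᶜ, (1 - ‖v i‖ / Real.sqrt τ)) *
            ∑ i, ‖(if i ∈ S then ‖v i‖⁻¹ • v i else (0:E))‖^2) := by
  set p : Fin n → ℝ := fun i => ‖v i‖ / Real.sqrt τ with hp
  set Q : ℝ := ∑ i, ∑ j, A i j * ⟪v i, v j⟫ with hQ
  have hnv : ∀ i, (0:ℝ) < ‖v i‖ := fun i => norm_pos_iff.mpr (hv0 i)
  have hsτ : (0:ℝ) < Real.sqrt τ := Real.sqrt_pos.mpr hτ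
  have hsΔ : (0:ℝ) < Real.sqrt Δ := Real.sqrt_pos.mpr (lt_trans one_pos hΔ)
  have hne : Nonempty (Fin n) := by
    rcases isEmpty_or_nonempty (Fin n) with h | h
    · rw [hQ] at hpos; simp at hpos
    · exact h
  -- numerator computation
  have hW : ∀ S : Finset (Fin n),
      ((∏ i ∈ S, p i) * ∏ i ∈ Sᶜ, (1 - p i)) *
        ∑ i, ∑ j, A i j *
          ⟪(if i ∈ S then ‖v i‖⁻¹ • v i else 0), (if j ∈ S then ‖v j‖⁻¹ • v j else 0)⟫
      = ∑ i, ∑ j, ((∏ k ∈ S, p k) * ∏ k ∈ Sᶜ, (1 - p k)) *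
          ((if i ∈ S then (1:ℝ) else 0) * (if j ∈ S then (1:ℝ) else 0)) *
          (A i j * (‖v i‖⁻¹ * ‖v j‖⁻¹ * ⟪v i, v j⟫)) := by
    intro S
    rw [Finset.mul_sum]
    refine Finset.sum_congr rfl fun i _ => ?_
    rw [Finset.mul_sum]
    refine Finset.sum_congr rfl fun j _ => ?_
    by_cases hi : i ∈ S
    · by_cases hj : j ∈ S
      · simp only [hi, hj, if_true, mul_one, one_mul]
        rw [real_inner_smul_left, real_inner_smul_right]; ring
      · simp [hi, hj]
    · simp [hi]
  have hnum : (∑ S : Finset (Fin n),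
      ((∏ i ∈ S, p i) * ∏ i ∈ Sᶜ, (1 - p i)) *
        ∑ i, ∑ j, A i j *
          ⟪(if i ∈ S then ‖v i‖⁻¹ • v i else 0), (if j ∈ S then ‖v j‖⁻¹ • v j else 0)⟫)
      = Q / τ := by
    simp_rw [hW]
    rw [Finset.sum_comm]
    have key : ∀ i : Fin n, (∑ S : Finset (Fin n), ∑ j,
        ((∏ k ∈ S, p k) * ∏ k ∈ Sᶜ, (1 - p k)) *
          ((if i ∈ S then (1:ℝ) else 0) * (if j ∈ S then (1:ℝ) else 0)) *
          (A i j * (‖v i‖⁻¹ * ‖v j‖⁻¹ * ⟪v i, v j⟫)))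
        = (∑ j, A i j * ⟪v i, v j⟫) / τ := by
      intro i
      rw [Finset.sum_comm, Finset.sum_div]
      refine Finset.sum_congr rfl fun j _ => ?_
      rcases eq_or_ne i j with rfl | hij
      · simp [hdiag]
      · rw [← Finset.sum_mul, marginal_two p i j hij]
        have h1 : ‖v i‖ ≠ 0 := (hnv i).ne'
        have h2 : ‖v j‖ ≠ 0 := (hnv j).ne'
        have h3 : Real.sqrt τ * Real.sqrt τ = τ := Real.mul_self_sqrt hτ.le
        rw [hp]
        conv_rhs => rw [← h3]
        field_simp
    simp_rw [key]
    rw [← Finset.sum_div]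
  -- denominator computation
  have hden : (∑ S : Finset (Fin n), ((∏ i ∈ S, p i) * ∏ i ∈ Sᶜ, (1 - p i)) *
      ∑ i, ‖(if i ∈ S then ‖v i‖⁻¹ • v i else (0:E))‖^2) = (∑ i, ‖v i‖) / Real.sqrt τ := by
    have h1 : ∀ (S : Finset (Fin n)) (i : Fin n),
        ‖(if i ∈ S then ‖v i‖⁻¹ • v i else (0:E))‖^2 = if i ∈ S then (1:ℝ) else 0 := by
      intro S i
      by_cases hi : i ∈ S
      · simp [hi, norm_smul, abs_of_pos (inv_pos.mpr (hnv i)),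
          inv_mul_cancel₀ (hnv i).ne']
      · simp [hi]
    simp_rw [h1, Finset.mul_sum]
    rw [Finset.sum_comm]
    rw [show (∑ i, ‖v i‖) / Real.sqrt τ = ∑ i, p i by rw [hp, ← Finset.sum_div]]
    exact Finset.sum_congr rfl fun i _ => marginal_one p i
  rw [hnum, hden]
  -- final arithmetic
  set s : ℝ := ∑ i, ‖v i‖ with hs'
  set V : ℝ := ∑ i, ‖v i‖^2 with hV'
  have hs : 0 < s := Finset.sum_pos (fun i _ => hnv i) Finset.univ_nonempty
  have hV : 0 < V := Finset.sum_pos (fun i _ => pow_pos (hnv i) 2) Finset.univ_nonempty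
  have hτ' : τ = Real.sqrt τ * Real.sqrt τ := (Real.mul_self_sqrt hτ.le).symm
  have key : Real.sqrt τ * s ≤ Real.sqrt Δ * V := by
    rw [hs', hV', Finset.mul_sum, Finset.mul_sum]
    refine Finset.sum_le_sum fun i _ => ?_
    have h1 : Real.sqrt (τ/Δ) ≤ ‖v i‖ := by
      have := Real.sqrt_le_sqrt (hlb i)
      rwa [Real.sqrt_sq (hnv i).le] at this
    have h2 : Real.sqrt (τ/Δ) = Real.sqrt τ / Real.sqrt Δ := Real.sqrt_div hτ.le Δ
    rw [h2, div_le_iff₀ hsΔ] at h1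
    nlinarith [hnv i]
  have h5 : s / Real.sqrt τ ≤ Real.sqrt Δ * V / τ := by
    rw [div_le_div_iff₀ hsτ hτ]
    calc s * τ = (Real.sqrt τ * s) * Real.sqrt τ := by
          conv_lhs => rw [hτ']
          ring
      _ ≤ (Real.sqrt Δ * V) * Real.sqrt τ := mul_le_mul_of_nonneg_right key hsτ.le
  rw [div_le_div_iff₀ hV (div_pos hs hsτ)]
  calc 1 / Real.sqrt Δ * Q * (s / Real.sqrt τ)
      ≤ 1 / Real.sqrt Δ * Q * (Real.sqrt Δ * V / τ) :=
        mul_le_mul_of_nonneg_left h5 (mul_nonneg (by positivity) hpos.le)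
    _ = Q / τ * V := by field_simp
end
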